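/- arXiv:1605.01305 — 6 statements merged into one kernel-verified Lean document; each statement's English description precedes it below -/
import Mathlib

section
/- Let A be a PID with fraction field F ≠ A, let K/F be a field extension of finite degree N ≥ 2, and let S be an A-order in K with A-basis 1 = α₁, α₂, …, α_N. Let x be a nonzero nonunit of A and let p be a prime element of A dividing x. Set R = A + xS. Then 𝔭 = pA + xS is a maximal ideal of R with R/𝔭 ≅ A/(p), and 𝔭/𝔭² is a free A/(p)-module of rank N; in particular dim_{R/𝔭} 𝔭/𝔭² = N. -/
set_option maxHeartbeats 1000000
set_option synthInstance.maxHeartbeats 100000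

/-- Let `A` be a PID, not a field, with fraction field `F`, `K/F` of degree `N ≥ 2`,
`S` an `A`-order in `K` with `A`-basis `1 = α 0, α 1, …`, `x` a nonzero nonunit of `A`,
`p` a prime element dividing `x`, and `R = A + xS`.  Then `𝔭 = pA + xS` is a maximal
ideal of `R` with `R/𝔭 ≅ A/(p)` and `dim_{R/𝔭} 𝔭/𝔭² = N`. -/
theorem order_A_plus_xS_cotangent (A F K : Type*) [CommRing A] [IsDomain A]
    [IsPrincipalIdealRing A] [Field F] [Algebra A F] [IsFractionRing A F]
    (hA : ¬ IsField A) [Field K] [Algebra F K] [Algebra A K] [IsScalarTower A F K]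
    (N : ℕ) (hN : 2 ≤ N) (hK : Module.finrank F K = N)
    (S : Subalgebra A K) (α : Module.Basis (Fin N) A S) (hα : (α ⟨0, by omega⟩ : K) = 1)
    (x : A) (hx0 : x ≠ 0) (hxu : ¬ IsUnit x) (p : A) (hp : Prime p) (hpx : p ∣ x)
    (R : Subalgebra A K)
    (hR : ∀ r : K, r ∈ R ↔ ∃ a : A, ∃ s ∈ S, r = algebraMap A K a + algebraMap A K x * s)
    (𝔭 : Ideal R)
    (h𝔭 : ∀ r : R, r ∈ 𝔭 ↔ ∃ a : A, ∃ s ∈ S,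
      (r : K) = algebraMap A K (p * a) + algebraMap A K x * s) :
    𝔭.IsMaximal ∧ Nonempty ((R ⧸ 𝔭) ≃+* A ⧸ Ideal.span {p}) ∧
      Module.finrank (R ⧸ 𝔭) 𝔭.Cotangent = N := by
  classical
  obtain ⟨y, hy⟩ := hpx
  have hp0 : p ≠ 0 := hp.ne_zero
  set ι := algebraMap A K with hιdef
  set z : Fin N := ⟨0, by omega⟩ with hzdef
  have hz : (α z : K) = 1 := hα
  -- key coordinate lemma
  have key : ∀ (a : A) (s : S), ι a = ι x * (s : K) →
      a = x * α.repr s z ∧ ∀ j, j ≠ z → α.repr s j = 0 := by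
    intro a s h
    have hS : (a • α z : S) = x • s := by
      apply Subtype.ext
      show ((a • α z : S) : K) = ((x • s : S) : K)
      rw [SetLike.val_smul, SetLike.val_smul, hz, Algebra.smul_def, Algebra.smul_def, mul_one]
      exact h
    have h1 : ∀ j, (Finsupp.single z a : Fin N →₀ A) j = x * α.repr s j := by
      intro j
      have := congrArg (fun t : S => α.repr t j) hS
      simpa using this
    constructor
    · have := h1 z
      rwa [Finsupp.single_eq_same] at this
    · intro j hj
      have := h1 j
      rw [Finsupp.single_eq_of_ne hj] at this
      rcases mul_eq_zero.mp this.symm with h' | h'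
      · exact absurd h' hx0
      · exact h'
  -- elements
  let pel : R := algebraMap A R p
  have hpelK : (pel : K) = ι p := rfl
  have hpel𝔭 : pel ∈ 𝔭 := (h𝔭 pel).2 ⟨1, 0, zero_mem S, by simp [pel, hpelK]⟩
  let xα : Fin N → R := fun i => ⟨ι x * (α i : K), (hR _).2 ⟨0, α i, (α i).2, by simp⟩⟩
  have hxαK : ∀ i, ((xα i : R) : K) = ι x * (α i : K) := fun i => rfl
  have hxα𝔭 : ∀ i, xα i ∈ 𝔭 := fun i => (h𝔭 _).2 ⟨0, α i, (α i).2, by simp [hxαK]⟩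
  -- Part A
  haveI hmaxp : (Ideal.span {p} : Ideal A).IsMaximal :=
    PrincipalIdealRing.isMaximal_of_irreducible hp.irreducible
  let q : A →+* R ⧸ 𝔭 := (Ideal.Quotient.mk 𝔭).comp (algebraMap A R)
  have hqsurj : Function.Surjective q := by
    intro m
    obtain ⟨r, rfl⟩ := Ideal.Quotient.mk_surjective m
    obtain ⟨a, s, hs, hrs⟩ := (hR r).1 r.2
    refine ⟨a, ?_⟩
    show Ideal.Quotient.mk 𝔭 (algebraMap A R a) = Ideal.Quotient.mk 𝔭 r
    rw [Ideal.Quotient.mk_eq_mk_iff_sub_mem]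
    refine (h𝔭 _).2 ⟨0, -s, neg_mem hs, ?_⟩
    have : ((algebraMap A R a - r : R) : K) = ι a - (r : K) := by push_cast; rfl
    rw [this, hrs]
    simp
  have hqker : RingHom.ker q = Ideal.span {p} := by
    ext a
    rw [RingHom.mem_ker, Ideal.mem_span_singleton]
    constructor
    · intro h
      have hmem : algebraMap A R a ∈ 𝔭 := by
        rwa [← Ideal.Quotient.eq_zero_iff_mem]
      obtain ⟨a', s, hs, he⟩ := (h𝔭 _).1 hmem
      have he2 : ι (a - p * a') = ι x * ((⟨s, hs⟩ : S) : K) := by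
        have h3 : ((algebraMap A R a : R) : K) = ι a := rfl
        rw [h3, map_mul] at he
        rw [map_sub, map_mul]
        show _ = ι x * s
        linear_combination he
      have hc := (key _ _ he2).1
      refine ⟨a' + y * (α.repr ⟨s, hs⟩ z), ?_⟩
      linear_combination hc + (α.repr ⟨s, hs⟩ z) * hy
    · rintro ⟨b, rfl⟩
      show Ideal.Quotient.mk 𝔭 (algebraMap A R (p * b)) = 0
      rw [Ideal.Quotient.eq_zero_iff_mem]
      exact (h𝔭 _).2 ⟨b, 0, zero_mem S, by simp [hιdef]⟩
  let e₀ : (A ⧸ Ideal.span {p}) ≃+* R ⧸ 𝔭 :=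
    (Ideal.quotEquivOfEq hqker.symm).trans (RingHom.quotientKerEquivOfSurjective hqsurj)
  have hfieldA : IsField (A ⧸ Ideal.span {p}) := by
    letI := Ideal.Quotient.field (Ideal.span {p} : Ideal A)
    exact Field.toIsField _
  have hfield : IsField (R ⧸ 𝔭) := MulEquiv.isField hfieldA e₀.symm.toMulEquiv
  have hmax : 𝔭.IsMaximal := Ideal.Quotient.maximal_of_isField _ hfield
  refine ⟨hmax, ⟨e₀.symm⟩, ?_⟩
  -- Part B
  haveI := hmax
  haveI : Nontrivial (R ⧸ 𝔭) := Ideal.Quotient.nontrivial_iff.mpr hmax.ne_top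
  let g : Fin N → 𝔭 := fun i => if i = z then ⟨pel, hpel𝔭⟩ else ⟨xα i, hxα𝔭 i⟩
  have hgz : g z = ⟨pel, hpel𝔭⟩ := if_pos rfl
  have hgi : ∀ i, i ≠ z → g i = ⟨xα i, hxα𝔭 i⟩ := fun i hi => if_neg hi
  let eb : Fin N → 𝔭.Cotangent := fun i => 𝔭.toCotangent (g i)
  have hsmul : ∀ (r : R) (t : 𝔭),
      Ideal.Quotient.mk 𝔭 r • 𝔭.toCotangent t = 𝔭.toCotangent (r • t) := fun r t => rfl
  -- coercion helper
  have hval : ∀ (c : R) (t : 𝔭), (((c • t : 𝔭) : R) : K) = (c : K) * ((t : R) : K) :=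
    fun c t => rfl
  have hvalsum : ∀ (w : Fin N → 𝔭), (((∑ i, w i : 𝔭) : R) : K) = ∑ i, ((w i : R) : K) := by
    intro w
    push_cast
    rfl
  have hxαz : (⟨xα z, hxα𝔭 z⟩ : 𝔭) = (algebraMap A R y) • (⟨pel, hpel𝔭⟩ : 𝔭) := by
    apply Subtype.ext; apply Subtype.ext
    show ι x * (α z : K) = _
    have h2 : (((algebraMap A R y • (⟨pel, hpel𝔭⟩ : 𝔭) : 𝔭) : R) : K) = ι y * ι p := rfl
    rw [h2, hz, mul_one, hy, map_mul]
    ring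
  have hespan : ∀ i, 𝔭.toCotangent ⟨xα i, hxα𝔭 i⟩ ∈
      Submodule.span (R ⧸ 𝔭) (Set.range eb) := by
    intro i
    by_cases hi : i = z
    · subst hi
      rw [hxαz, ← hsmul]
      refine Submodule.smul_mem _ _ (Submodule.subset_span ⟨z, ?_⟩)
      exact congrArg 𝔭.toCotangent hgz
    · refine Submodule.subset_span ⟨i, ?_⟩
      exact congrArg 𝔭.toCotangent (hgi i hi)
  have hspan : ⊤ ≤ Submodule.span (R ⧸ 𝔭) (Set.range eb) := by
    rintro m -
    obtain ⟨⟨r, hr⟩, rfl⟩ := 𝔭.toCotangent_surjective m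
    obtain ⟨a, s, hs, he⟩ := (h𝔭 _).1 hr
    have hrep : (⟨r, hr⟩ : 𝔭) = (algebraMap A R a) • (⟨pel, hpel𝔭⟩ : 𝔭) +
        ∑ i, (algebraMap A R (α.repr ⟨s, hs⟩ i)) • (⟨xα i, hxα𝔭 i⟩ : 𝔭) := by
      apply Subtype.ext; apply Subtype.ext
      show (r : K) = ((((algebraMap A R a • (⟨pel, hpel𝔭⟩ : 𝔭) +
        ∑ i, (algebraMap A R (α.repr ⟨s, hs⟩ i)) • (⟨xα i, hxα𝔭 i⟩ : 𝔭) : 𝔭) : R) : K))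
      have hsum : ∑ i, α.repr ⟨s, hs⟩ i • (α i : K) = s := by
        have h5 := congrArg (fun t : S => (t : K)) (α.sum_repr ⟨s, hs⟩)
        simp only [AddSubmonoidClass.coe_finsetSum, SetLike.val_smul] at h5
        exact h5
      have h7 : ∀ X Y : 𝔭, (((X + Y : 𝔭) : R) : K) = ((X : R) : K) + ((Y : R) : K) :=
        fun X Y => rfl
      have hcoe : ∀ b : A, ((algebraMap A R b : R) : K) = ι b := fun _ => rfl
      rw [h7, hval, hvalsum]
      simp only [hval, hcoe, hpelK, hxαK]
      have h8 : ∀ i : Fin N, ι (α.repr ⟨s, hs⟩ i) * (ι x * (α i : K)) =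
          ι x * (α.repr ⟨s, hs⟩ i • (α i : K)) := fun i => by
        rw [Algebra.smul_def]; ring
      rw [Finset.sum_congr rfl (fun i _ => h8 i), ← Finset.mul_sum, hsum, he, map_mul]
      ring
    rw [hrep]
    rw [map_add, map_sum]
    refine Submodule.add_mem _ ?_ (Submodule.sum_mem _ fun i _ => ?_)
    · rw [← hsmul]
      refine Submodule.smul_mem _ _ (Submodule.subset_span ⟨z, ?_⟩)
      exact congrArg 𝔭.toCotangent hgz
    · rw [← hsmul]
      exact Submodule.smul_mem _ _ (hespan i)
  -- characterize 𝔭^2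
  have hyK : ι x = ι p * ι y := by rw [hy, map_mul]
  have hJ : ∀ r : R, r ∈ 𝔭 ^ 2 → ∃ a : A, ∃ s ∈ S,
      (r : K) = ι (p * (p * a)) + ι (p * x) * s := by
    let J : Ideal R :=
      { carrier := {r : R | ∃ a : A, ∃ s ∈ S, (r : K) = ι (p * (p * a)) + ι (p * x) * s}
        zero_mem' := ⟨0, 0, zero_mem S, by simp⟩
        add_mem' := by
          rintro r1 r2 ⟨a1, s1, hs1, h1⟩ ⟨a2, s2, hs2, h2⟩
          refine ⟨a1 + a2, s1 + s2, add_mem hs1 hs2, ?_⟩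
          have hadd : ((r1 + r2 : R) : K) = (r1 : K) + (r2 : K) := rfl
          rw [hadd, h1, h2]
          push_cast [map_mul, map_add]
          ring
        smul_mem' := by
          rintro c r ⟨a, s, hs, hsr⟩
          obtain ⟨b, t, ht, hbt⟩ := (hR c).1 c.2
          refine ⟨b * a, ι b * s + ι (p * a) * t + ι x * (t * s),
            add_mem (add_mem (mul_mem (S.algebraMap_mem b) hs)
              (mul_mem (S.algebraMap_mem (p * a)) ht))
              (mul_mem (S.algebraMap_mem x) (mul_mem ht hs)), ?_⟩
          have hmul : ((c • r : R) : K) = (c : K) * (r : K) := rfl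
          rw [hmul, hbt, hsr]
          push_cast [map_mul, map_add]
          ring }
    intro r hr
    have hle : 𝔭 ^ 2 ≤ J := by
      rw [pow_two]
      refine Ideal.mul_le.mpr ?_
      rintro r1 h1 r2 h2
      obtain ⟨a1, s1, hs1, e1⟩ := (h𝔭 r1).1 h1
      obtain ⟨a2, s2, hs2, e2⟩ := (h𝔭 r2).1 h2
      refine ⟨a1 * a2, ι a1 * s2 + ι a2 * s1 + ι y * (s1 * s2),
        add_mem (add_mem (mul_mem (S.algebraMap_mem a1) hs2)
          (mul_mem (S.algebraMap_mem a2) hs1))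
          (mul_mem (S.algebraMap_mem y) (mul_mem hs1 hs2)), ?_⟩
      have hmul : ((r1 * r2 : R) : K) = (r1 : K) * (r2 : K) := rfl
      rw [hmul, e1, e2]
      push_cast [map_mul, map_add]
      linear_combination (s1 * s2 * ι x) * hyK
    exact hle hr
  -- linear independence
  have hli : LinearIndependent (R ⧸ 𝔭) eb := by
    rw [Fintype.linearIndependent_iff]
    intro c hc i
    choose rr hrr using fun j => Ideal.Quotient.mk_surjective (c j)
    have h0 : 𝔭.toCotangent (∑ j, rr j • g j) = 0 := by
      rw [map_sum, ← hc]
      refine Finset.sum_congr rfl fun j _ => ?_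
      rw [← hrr j]
      exact (hsmul _ _).symm
    have hsq := (𝔭.toCotangent_eq_zero _).1 h0
    obtain ⟨a', s', hs', he'⟩ := hJ _ hsq
    choose aa tt htt hrt using fun j => (hR (rr j)).1 (rr j).2
    have hgK : ∀ j, ((g j : R) : K) = if j = z then ι p else ι x * (α j : K) := by
      intro j
      by_cases hj : j = z
      · subst hj; rw [hgz, if_pos rfl]; exact hpelK
      · rw [hgi j hj, if_neg hj]
    have hval' : (((∑ j, rr j • g j : 𝔭) : R) : K)
        = ∑ j, (ι (aa j) + ι x * tt j) * (if j = z then ι p else ι x * (α j : K)) := by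
      rw [hvalsum]
      refine Finset.sum_congr rfl fun j _ => ?_
      rw [hval, hrt j, hgK j]
    rw [hval', ← Finset.add_sum_erase _ _ (Finset.mem_univ z), if_pos rfl] at he'
    have herase : ∀ j ∈ Finset.univ.erase z,
        (ι (aa j) + ι x * tt j) * (if j = z then ι p else ι x * (α j : K))
        = ι x * (ι (aa j) * (α j : K) + ι x * (tt j * (α j : K))) := by
      intro j hj
      rw [if_neg (Finset.ne_of_mem_erase hj)]
      ring
    rw [Finset.sum_congr rfl herase, ← Finset.mul_sum] at he'
    set Sm : K := ∑ j ∈ Finset.univ.erase z,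
      (ι (aa j) * (α j : K) + ι x * (tt j * (α j : K))) with hSm
    let tS : Fin N → S := fun j => ⟨tt j, htt j⟩
    let wS : S := p • (⟨s', hs'⟩ : S) - (p • tS z +
        ∑ j ∈ Finset.univ.erase z, ((aa j) • α j + x • (tS j * α j)))
    have hwK : (wS : K) = ι p * s' - (ι p * tt z + Sm) := by
      push_cast [wS, SetLike.val_smul, hSm]
      simp only [Algebra.smul_def]
      rfl
    have hkeyeq : ι (p * aa z - p * (p * a')) = ι x * (wS : K) := by
      simp only [map_mul] at he'
      rw [hwK]
      simp only [map_sub, map_mul]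
      linear_combination he'
    obtain ⟨h1, h2⟩ := key _ _ hkeyeq
    have hrepr : ∀ j, α.repr wS j = p * α.repr ⟨s', hs'⟩ j - (p * α.repr (tS z) j +
        ((∑ j' ∈ Finset.univ.erase z, if j' = j then aa j' else 0) +
          x * ∑ j' ∈ Finset.univ.erase z, α.repr (tS j' * α j') j)) := by
      intro j
      simp only [wS, map_sub, map_add, map_smul, map_sum, Finsupp.sub_apply, Finsupp.add_apply,
        Finsupp.smul_apply, smul_eq_mul, Module.Basis.repr_self_apply, Finset.mul_sum,
        Finsupp.finset_sum_apply, Finset.sum_add_distrib, mul_ite, mul_one, mul_zero]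
    have hdvd : p ∣ aa i := by
      by_cases hi : i = z
      · subst hi
        have h3 := hrepr z
        rw [Finset.sum_ite_eq', if_neg (Finset.notMem_erase z Finset.univ)] at h3
        rw [hy] at h1 h3
        rw [h3] at h1
        refine ⟨a' + y * (α.repr ⟨s', hs'⟩ z - α.repr (tS z) z
          - y * ∑ j' ∈ Finset.univ.erase z, α.repr (tS j' * α j') z), ?_⟩
        refine mul_left_cancel₀ hp0 ?_
        linear_combination h1
      · have h3 := hrepr i
        rw [Finset.sum_ite_eq', if_pos (Finset.mem_erase.mpr ⟨hi, Finset.mem_univ i⟩),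
          h2 i hi, hy] at h3
        refine ⟨α.repr ⟨s', hs'⟩ i - α.repr (tS z) i
          - y * ∑ j' ∈ Finset.univ.erase z, α.repr (tS j' * α j') i, ?_⟩
        linear_combination h3
    obtain ⟨b, hb⟩ := hdvd
    rw [← hrr i, Ideal.Quotient.eq_zero_iff_mem]
    refine (h𝔭 _).2 ⟨b, tt i, htt i, ?_⟩
    rw [hrt i, hb]
  let B : Module.Basis (Fin N) (R ⧸ 𝔭) 𝔭.Cotangent := Module.Basis.mk hli hspan
  rw [Module.finrank_eq_card_basis B, Fintype.card_fin]
end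

section
/- Let 𝔯 be a nonzero commutative ring. If the polynomial ring 𝔯[t] has the property that there is n ∈ ℕ with every ideal of 𝔯[t] generated by at most n elements, then 𝔯 is Artinian. -/
open Polynomial Submodule

/-- A Noetherian module killed by a maximal ideal is Artinian. -/
lemma isArtinian_of_killed_by_maximal {R : Type*} [CommRing R] {M : Type*} [AddCommGroup M]
    [Module R M] [IsNoetherian R M] (m : Ideal R) (hm : m.IsMaximal)
    (hk : ∀ r ∈ m, ∀ x : M, r • x = 0) : IsArtinian R M := by
  have htor : Module.IsTorsionBySet R M m := fun x r => hk r r.2 x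
  letI : Module (R ⧸ m) M := htor.module
  haveI : IsScalarTower R (R ⧸ m) M := htor.isScalarTower
  letI : Field (R ⧸ m) := Ideal.Quotient.field m
  haveI : IsNoetherian (R ⧸ m) M := isNoetherian_of_tower R inferInstance
  haveI : IsArtinian (R ⧸ m) M := inferInstance
  -- transfer back: every `R`-submodule is an `R ⧸ m`-submodule
  let f : Submodule R M → Submodule (R ⧸ m) M := fun N =>
    { carrier := N
      add_mem' := fun ha hb => N.add_mem ha hb
      zero_mem' := N.zero_mem
      smul_mem' := by
        intro c x hx
        obtain ⟨r, rfl⟩ := Ideal.Quotient.mk_surjective c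
        rw [htor.mk_smul]
        exact N.smul_mem r hx }
  have hmono : StrictMono f := fun N₁ N₂ h => by
    constructor
    · intro x hx; exact h.1 hx
    · intro hle; exact h.2 fun x hx => hle hx
  exact hmono.wellFoundedLT

lemma list_prod_le_of_mem {R : Type*} [CommRing R] {p : Ideal R} :
    ∀ {l : List (Ideal R)}, p ∈ l → l.prod ≤ p := by
  intro l
  induction l with
  | nil => intro h; simp at h
  | cons q t iht =>
    intro hpl
    rw [List.prod_cons]
    rcases List.mem_cons.mp hpl with rfl | hmem'
    · exact Ideal.mul_le_left
    · exact le_trans Ideal.mul_le_right (iht hmem')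

lemma isArtinian_of_list_prod_smul {R : Type*} [CommRing R] :
    ∀ (l : List (Ideal R)) (M : Type*) [AddCommGroup M] [Module R M] [IsNoetherian R M],
      (∀ m ∈ l, m.IsMaximal) → (l.prod • (⊤ : Submodule R M) = ⊥) → IsArtinian R M := by
  intro l
  induction l with
  | nil =>
    intro M _ _ _ _ hbot
    simp only [List.prod_nil, Ideal.one_eq_top, Submodule.top_smul] at hbot
    haveI : Subsingleton M := by
      refine subsingleton_of_forall_eq 0 fun x => ?_
      have hx : x ∈ (⊤ : Submodule R M) := trivial
      rw [hbot] at hx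
      simpa using hx
    infer_instance
  | cons m l ih =>
    intro M _ _ _ hmax hbot
    rw [List.prod_cons, mul_smul] at hbot
    set N : Submodule R M := l.prod • ⊤ with hN
    haveI : IsArtinian R N := by
      apply isArtinian_of_killed_by_maximal m (hmax m List.mem_cons_self)
      intro r hr x
      have : r • (x : M) ∈ m • N := Submodule.smul_mem_smul hr x.2
      rw [hbot] at this
      exact Subtype.ext this
    haveI : IsArtinian R (M ⧸ N) := by
      apply ih (M ⧸ N) (fun m hm => hmax m (List.mem_cons_of_mem _ hm))
      have : (⊤ : Submodule R (M ⧸ N)) = Submodule.map N.mkQ ⊤ := by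
        rw [Submodule.map_top, Submodule.range_mkQ]
      rw [this, ← Submodule.map_smul'', ← hN, eq_bot_iff,
        Submodule.map_le_iff_le_comap, Submodule.comap_bot, Submodule.ker_mkQ]
    exact isArtinian_of_range_eq_ker N.subtype N.mkQ
      (by rw [Submodule.range_subtype, Submodule.ker_mkQ])

lemma isArtinianRing_of_primes_maximal (R : Type*) [CommRing R] [IsNoetherianRing R]
    (hm : ∀ p : Ideal R, p.IsPrime → p.IsMaximal) : IsArtinianRing R := by
  obtain ⟨k, hk⟩ := IsNoetherianRing.isNilpotent_nilradical R
  have hfin := minimalPrimes.finite_of_isNoetherianRing R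
  set l₀ : List (Ideal R) := hfin.toFinset.toList with hl₀
  have hmem : ∀ p ∈ l₀, p ∈ minimalPrimes R := by
    intro p hp
    rw [hl₀, Finset.mem_toList, Set.Finite.mem_toFinset] at hp
    exact hp
  have hprod_le : l₀.prod ≤ nilradical R := by
    rw [nilradical_eq_sInf]
    refine le_sInf fun J hJ => ?_
    haveI : J.IsPrime := hJ
    obtain ⟨p, hp, hple⟩ := Ideal.exists_minimalPrimes_le (bot_le : (⊥ : Ideal R) ≤ J)
    have hpl : p ∈ l₀ := by rw [hl₀, Finset.mem_toList, Set.Finite.mem_toFinset]; exact hp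
    exact le_trans (list_prod_le_of_mem hpl) hple
  set l : List (Ideal R) := (List.replicate k l₀).flatten with hl
  have hlmax : ∀ m ∈ l, m.IsMaximal := by
    intro m hmm
    rw [hl, List.mem_flatten] at hmm
    obtain ⟨t, ht, hmt⟩ := hmm
    rw [List.mem_replicate] at ht
    rw [ht.2] at hmt
    exact hm m (hmem m hmt).1.1
  have hlprod : l.prod = ⊥ := by
    have h1 : l.prod = l₀.prod ^ k := by
      rw [hl, List.prod_flatten, List.map_replicate, List.prod_replicate]
    have h2 := Ideal.pow_right_mono hprod_le k
    rw [hk] at h2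
    rw [h1]
    exact le_bot_iff.mp h2
  have : IsArtinian R R := by
    apply isArtinian_of_list_prod_smul l R hlmax
    rw [hlprod]
    simp
  exact this

lemma isField_of_polynomial_bounded_gen {D : Type*} [CommRing D] [IsDomain D] (n : ℕ)
    (h : ∀ I : Ideal (Polynomial D),
      ∃ s : Finset (Polynomial D), s.card ≤ n ∧ Ideal.span (s : Set (Polynomial D)) = I) :
    IsField D := by
  classical
  by_contra hF
  obtain ⟨a, ha0, haU⟩ := Ring.exists_not_isUnit_of_not_isField hF
  set A : Ideal D := Ideal.span {a} with hA
  haveI : Nontrivial (D ⧸ A) :=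
    Ideal.Quotient.nontrivial_iff.mpr (by rwa [hA, Ne, Ideal.span_singleton_eq_top])
  set k := D ⧸ A with hk
  let g : Fin (n + 1) → Polynomial D := fun i => C (a ^ (n - (i : ℕ))) * X ^ (i : ℕ)
  obtain ⟨s, hcard, hspan⟩ := h (Ideal.span (Set.range g))
  set I : Ideal (Polynomial D) := Ideal.span (Set.range g) with hI
  -- every element of `I` has `i`-th coefficient divisible by `a ^ (n - i)`
  have hdvd : ∀ f ∈ I, ∀ i : ℕ, i ≤ n → a ^ (n - i) ∣ f.coeff i := by
    intro f hf
    refine Submodule.span_induction ?_ ?_ ?_ ?_ hf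
    · rintro _ ⟨j, rfl⟩ i hi
      simp only [g, coeff_C_mul, coeff_X_pow]
      rcases eq_or_ne i (j : ℕ) with rfl | hij
      · simpa using dvd_refl _
      · simp [hij]
    · simp
    · intro x y _ _ hx hy i hi
      simpa using dvd_add (hx i hi) (hy i hi)
    · intro q f _ hf i hi
      rw [smul_eq_mul, coeff_mul]
      refine Finset.dvd_sum fun x hx => Dvd.dvd.mul_left ?_ _
      have hx2 : x.2 ≤ i := by
        have := Finset.HasAntidiagonal.mem_antidiagonal.mp hx
        omega
      exact dvd_trans (pow_dvd_pow a (by omega)) (hf x.2 (le_trans hx2 hi))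
  -- quotient of the coefficient by the power of `a`
  let w : Polynomial D → ℕ → D := fun f i =>
    if hd : a ^ (n - i) ∣ f.coeff i then hd.choose else 0
  have hw : ∀ f ∈ I, ∀ i : ℕ, i ≤ n → a ^ (n - i) * w f i = f.coeff i := by
    intro f hf i hi
    have hd := hdvd f hf i hi
    simp only [w, dif_pos hd]
    exact hd.choose_spec.symm
  have hane : ∀ i : ℕ, a ^ (n - i) ≠ 0 := fun i => pow_ne_zero _ ha0
  let v : Polynomial D → (Fin (n + 1) → k) := fun f i =>
    Ideal.Quotient.mk A (w f (i : ℕ))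
  set T : Submodule k (Fin (n + 1) → k) :=
    Submodule.span k ((s.image v : Finset (Fin (n + 1) → k)) : Set (Fin (n + 1) → k)) with hT
  -- the image under `v` of any element of `I` lies in `T`
  have hvT : ∀ f ∈ I, v f ∈ T := by
    have main : ∀ f ∈ Ideal.span (s : Set (Polynomial D)), f ∈ I ∧ v f ∈ T := by
      intro f hf
      refine Submodule.span_induction ?_ ?_ ?_ ?_ hf
      · intro x hx
        refine ⟨by rw [← hspan]; exact Ideal.subset_span hx, Submodule.subset_span ?_⟩
        exact Finset.mem_coe.mpr (Finset.mem_image_of_mem v hx)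
      · refine ⟨zero_mem _, ?_⟩
        have hv0 : v 0 = 0 := by
          funext i
          have h0 : w 0 (i : ℕ) = 0 := by
            have := hw 0 (zero_mem _) i (by omega)
            simp only [coeff_zero] at this
            exact (mul_eq_zero.mp this).resolve_left (hane _)
          simp [v, h0]
        rw [hv0]; exact zero_mem _
      · intro x y hx' hy' hx hy
        refine ⟨add_mem hx.1 hy.1, ?_⟩
        have hvadd : v (x + y) = v x + v y := by
          funext i
          have hi : (i : ℕ) ≤ n := by omega
          have heq : w (x + y) (i : ℕ) = w x (i : ℕ) + w y (i : ℕ) := by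
            apply mul_left_cancel₀ (hane (i : ℕ))
            rw [mul_add, hw _ hx.1 _ hi, hw _ hy.1 _ hi, hw _ (add_mem hx.1 hy.1) _ hi,
              coeff_add]
          simp [v, heq]
        rw [hvadd]; exact add_mem hx.2 hy.2
      · intro q f hf' hf
        have hqf : q * f ∈ I := Ideal.mul_mem_left _ q hf.1
        refine ⟨by rw [smul_eq_mul]; exact hqf, ?_⟩
        have hv : v (q • f) = Ideal.Quotient.mk A (q.coeff 0) • v f := by
          funext i
          have hi : (i : ℕ) ≤ n := by omega
          have hkey : a ∣ w (q * f) (i : ℕ) - q.coeff 0 * w f (i : ℕ) := by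
            have h2 : a ^ (n - (i : ℕ)) * a ∣
                (q * f).coeff (i : ℕ) - q.coeff 0 * f.coeff (i : ℕ) := by
              have hcm : (q * f).coeff (i : ℕ) - q.coeff 0 * f.coeff (i : ℕ) =
                  ∑ x ∈ (Finset.HasAntidiagonal.antidiagonal (i : ℕ)).erase (0, (i : ℕ)),
                    q.coeff x.1 * f.coeff x.2 := by
                rw [coeff_mul, ← Finset.add_sum_erase _
                  (fun x => q.coeff x.1 * f.coeff x.2)
                  (show ((0 : ℕ), (i : ℕ)) ∈ Finset.HasAntidiagonal.antidiagonal (i : ℕ) from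
                    Finset.HasAntidiagonal.mem_antidiagonal.mpr (by simp))]
                simp [add_sub_cancel_left]
              rw [hcm, ← pow_succ]
              refine Finset.dvd_sum fun x hx => ?_
              have hxa : x.1 + x.2 = (i : ℕ) :=
                Finset.HasAntidiagonal.mem_antidiagonal.mp (Finset.mem_erase.mp hx).2
              have hx1 : x.1 ≠ 0 := by
                intro h0
                apply (Finset.mem_erase.mp hx).1
                have hx2' : x.2 = (i : ℕ) := by omega
                exact Prod.ext h0 hx2'
              have hx2 : x.2 < (i : ℕ) := by omega
              refine Dvd.dvd.mul_left ?_ _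
              exact dvd_trans (pow_dvd_pow a (by omega)) (hdvd f hf.1 x.2 (by omega))
            rw [← hw _ hqf _ hi, ← hw _ hf.1 _ hi] at h2
            have h3 : a ^ (n - (i : ℕ)) * a ∣
                a ^ (n - (i : ℕ)) * (w (q * f) (i : ℕ) - q.coeff 0 * w f (i : ℕ)) := by
              rw [mul_sub]
              convert h2 using 2
              ring
            exact (mul_dvd_mul_iff_left (hane (i : ℕ))).mp h3
          have hmk : Ideal.Quotient.mk A (w (q * f) (i : ℕ)) =
              Ideal.Quotient.mk A (q.coeff 0 * w f (i : ℕ)) := by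
            rw [Ideal.Quotient.mk_eq_mk_iff_sub_mem, hA, Ideal.mem_span_singleton]
            exact hkey
          simp only [v, Pi.smul_apply, smul_eq_mul, hmk, map_mul]
        rw [hv]
        exact Submodule.smul_mem _ _ hf.2
    intro f hf
    rw [← hspan] at hf
    exact (main f hf).2
  -- standard basis vectors lie in T
  have hgv : ∀ j : Fin (n + 1),
      v (g j) = fun i : Fin (n + 1) => if (j : ℕ) = (i : ℕ) then (1 : k) else 0 := by
    intro j
    funext i
    have hi : (i : ℕ) ≤ n := by omega
    have hgI : g j ∈ I := Ideal.subset_span (Set.mem_range_self j)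
    have hcoeff : (g j).coeff (i : ℕ) =
        a ^ (n - (i : ℕ)) * (if (j : ℕ) = (i : ℕ) then 1 else 0) := by
      simp only [g, coeff_C_mul, coeff_X_pow]
      rcases eq_or_ne ((j : ℕ)) ((i : ℕ)) with he | hne
      · simp [he]
      · simp [hne, Ne.symm hne]
    have hwg : w (g j) (i : ℕ) = if (j : ℕ) = (i : ℕ) then 1 else 0 :=
      mul_left_cancel₀ (hane _) (by rw [hw _ hgI _ hi, hcoeff])
    simp only [v, hwg]
    split_ifs <;> simp
  have hTtop : T = ⊤ := by
    rw [eq_top_iff]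
    intro x _
    rw [pi_eq_sum_univ x]
    refine Submodule.sum_mem _ fun j _ => Submodule.smul_mem _ _ ?_
    have hmem := hvT (g j) (Ideal.subset_span (Set.mem_range_self j))
    rw [hgv j] at hmem
    convert hmem using 2 with i
    simp [Fin.val_eq_val, eq_comm]
  -- rank contradiction
  have hrank := rank_span_finset_le (R := k) (s.image v)
  rw [← hT, hTtop, rank_top, rank_fun'] at hrank
  have hle : ((s.image v).card : Cardinal) ≤ (n : Cardinal) := by
    exact_mod_cast le_trans (Nat.cast_le.mpr (le_trans (Finset.card_image_le) hcard)) le_rfl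
  have : ((n + 1 : ℕ) : Cardinal) ≤ (n : Cardinal) := by
    calc ((n + 1 : ℕ) : Cardinal) = (Fintype.card (Fin (n + 1)) : Cardinal) := by simp
      _ ≤ ((s.image v).card : Cardinal) := hrank
      _ ≤ (n : Cardinal) := hle
  have : n + 1 ≤ n := by exact_mod_cast this
  omega


/-- If every ideal of `𝔯[t]` is generated by at most `n` elements (for some fixed `n`),
then `𝔯` is Artinian. -/
theorem artinian_of_polynomial_finite_rank (𝔯 : Type*) [CommRing 𝔯] [Nontrivial 𝔯] (n : ℕ)
    (h : ∀ I : Ideal (Polynomial 𝔯),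
      ∃ s : Finset (Polynomial 𝔯), s.card ≤ n ∧ Ideal.span (s : Set (Polynomial 𝔯)) = I) :
    IsArtinianRing 𝔯 := by
  classical
  -- `𝔯[t]` is Noetherian, hence so is `𝔯`
  haveI : IsNoetherianRing (Polynomial 𝔯) := by
    rw [isNoetherianRing_iff_ideal_fg]
    intro I
    obtain ⟨s, _, hs⟩ := h I
    exact ⟨s, hs⟩
  haveI : IsNoetherianRing 𝔯 :=
    isNoetherianRing_of_surjective (Polynomial 𝔯) 𝔯 Polynomial.constantCoeff
      (fun r => ⟨Polynomial.C r, by simp⟩)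
  -- every prime of `𝔯` is maximal
  refine isArtinianRing_of_primes_maximal 𝔯 fun p hp => ?_
  haveI : p.IsPrime := hp
  -- transfer the hypothesis to `(𝔯 ⧸ p)[t]`
  have hq : ∀ I : Ideal (Polynomial (𝔯 ⧸ p)),
      ∃ s : Finset (Polynomial (𝔯 ⧸ p)), s.card ≤ n ∧
        Ideal.span (s : Set (Polynomial (𝔯 ⧸ p))) = I := by
    intro I
    set φ : Polynomial 𝔯 →+* Polynomial (𝔯 ⧸ p) :=
      Polynomial.mapRingHom (Ideal.Quotient.mk p) with hφ
    have hsurj : Function.Surjective φ :=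
      Polynomial.map_surjective _ Ideal.Quotient.mk_surjective
    obtain ⟨s, hcard, hs⟩ := h (I.comap φ)
    refine ⟨s.image φ, le_trans (Finset.card_image_le) hcard, ?_⟩
    rw [Finset.coe_image, ← Ideal.map_span, hs, Ideal.map_comap_of_surjective φ hsurj]
  have hfield : IsField (𝔯 ⧸ p) := isField_of_polynomial_bounded_gen n hq
  exact Ideal.Quotient.maximal_of_isField p hfield
end

section
/- Let 𝔯 be a local Artinian commutative ring of length ℓ. Then every ideal of the polynomial ring 𝔯[t] can be generated by at most ℓ elements. -/
open Polynomial

universe u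

private lemma subtype_covBy {α : Type u} [PartialOrder α] {P : α → Prop} {a b : α}
    (ha : P a) (hb : P b) (h : a ⋖ b) : (⟨a, ha⟩ : Subtype P) ⋖ ⟨b, hb⟩ := by
  refine ⟨h.1, fun c h1 h2 => ?_⟩
  exact h.2 (show a < c.1 from h1) (show c.1 < b from h2)

private theorem aux_poly_span (ℓ : ℕ) : ∀ (R : Type u) [CommRing R]
    (s : CompositionSeries (Submodule R R)),
    s.head = ⊥ → s.last = ⊤ → s.length = ℓ →
    ∀ I : Ideal (Polynomial R),
      ∃ t : Finset (Polynomial R), t.card ≤ ℓ ∧ Ideal.span (t : Set (Polynomial R)) = I := by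
  induction ℓ with
  | zero =>
    intro R _ s hhead hlast hlen I
    have hlast0 : Fin.last s.length = (0 : Fin (s.length + 1)) := Fin.ext (by simp [hlen])
    have hbt : (⊥ : Submodule R R) = ⊤ := by
      rw [← hhead, ← hlast, RelSeries.head, RelSeries.last, hlast0]
    have h10 : (0 : R) = 1 := by
      have : (1 : R) ∈ (⊥ : Submodule R R) := hbt ▸ Submodule.mem_top
      simpa using this.symm
    haveI : Subsingleton R := subsingleton_of_zero_eq_one h10
    refine ⟨∅, by simp, ?_⟩
    simp only [Finset.coe_empty, Ideal.span_empty]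
    exact (Submodule.eq_bot_of_subsingleton).symm
  | succ n ih =>
    intro R _ s hhead hlast hlen I
    classical
    have hpos : 0 < s.length := by omega
    have h1lt : 1 < s.length + 1 := by omega
    set A : Submodule R R := s.toFun ⟨1, h1lt⟩ with hA
    have h0 : s.toFun ⟨0, by omega⟩ = ⊥ := by
      rw [← hhead]; rfl
    have hcov1 : (⊥ : Submodule R R) ⋖ A := by
      have h : s.toFun (Fin.castSucc ⟨0, hpos⟩) ⋖ s.toFun (Fin.succ ⟨0, hpos⟩) := s.step ⟨0, hpos⟩
      have e1 : Fin.castSucc ⟨0, hpos⟩ = (⟨0, by omega⟩ : Fin (s.length + 1)) := rfl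
      have e2 : Fin.succ ⟨0, hpos⟩ = (⟨1, h1lt⟩ : Fin (s.length + 1)) := rfl
      rw [e1, e2, h0] at h
      exact h
    have hAatom : IsAtom A := bot_covBy_iff.mp hcov1
    obtain ⟨x, hxA, hx0⟩ : ∃ x ∈ A, x ≠ 0 := by
      have hAne : A ≠ ⊥ := hAatom.1
      rw [Submodule.ne_bot_iff] at hAne
      exact hAne
    have hAx : Ideal.span {x} = A := by
      have hle : Ideal.span {x} ≤ A := by
        rw [Ideal.span_le, Set.singleton_subset_iff]; exact hxA
      rcases lt_or_eq_of_le hle with hlt | heq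
      · exfalso
        have := hAatom.2 _ hlt
        have hx : x ∈ Ideal.span {x} := Ideal.mem_span_singleton_self x
        rw [this] at hx
        exact hx0 (by simpa using hx)
      · exact heq
    haveI hsimp : IsSimpleModule R A := isSimpleModule_iff_isAtom.mpr hAatom
    set x' : A := ⟨x, hxA⟩ with hx'
    have hx'0 : x' ≠ 0 := by
      simp only [hx', ne_eq, Submodule.mk_eq_zero]; exact hx0
    set 𝔮 : Ideal R := LinearMap.ker (LinearMap.toSpanSingleton R A x') with h𝔮def
    haveI h𝔮 : 𝔮.IsMaximal := IsSimpleModule.ker_toSpanSingleton_isMaximal R hx'0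
    have hmem𝔮 : ∀ r : R, r ∈ 𝔮 ↔ r * x = 0 := by
      intro r
      rw [h𝔮def, LinearMap.mem_ker, LinearMap.toSpanSingleton_apply]
      rw [Subtype.ext_iff]
      simp [smul_eq_mul]
      exact Iff.rfl

    -- residue field part
    letI : Field (R ⧸ 𝔮) := Ideal.Quotient.field 𝔮
    set ρ : R →+* R ⧸ 𝔮 := Ideal.Quotient.mk 𝔮 with hρ
    set ρt : Polynomial R →+* Polynomial (R ⧸ 𝔮) := Polynomial.mapRingHom ρ with hρt
    have hρtsurj : Function.Surjective ρt := Polynomial.map_surjective ρ Ideal.Quotient.mk_surjective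
    set J : Ideal (Polynomial R) := I.colon (Ideal.span {C x}) with hJdef
    have hJ : ∀ p, p ∈ J ↔ C x * p ∈ I := by
      intro p
      rw [hJdef, Ideal.mem_colon_span_singleton, mul_comm]
    set Jbar : Ideal (Polynomial (R ⧸ 𝔮)) := J.map ρt with hJbar
    obtain ⟨g, hg⟩ := (IsPrincipalIdealRing.principal Jbar).principal
    rw [Ideal.submodule_span_eq] at hg
    have hgJ : g ∈ Jbar := hg ▸ Ideal.mem_span_singleton_self g
    obtain ⟨p₀, hp₀J, hp₀g⟩ := Ideal.mem_map_iff_of_surjective ρt hρtsurj |>.mp hgJ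
    set h : Polynomial R := C x * p₀ with hh
    have hhI : h ∈ I := (hJ p₀).mp hp₀J
    -- kernel of ρt is killed by C x
    have hCmap : ∀ w ∈ Ideal.map (C : R →+* Polynomial R) 𝔮, C x * w = 0 := by
      intro w hw
      rw [Ideal.map] at hw
      induction hw using Submodule.span_induction with
      | mem w hw =>
        obtain ⟨a, ha, rfl⟩ := hw
        rw [← C_mul, mul_comm, (hmem𝔮 a).mp ha, map_zero]
      | zero => rw [mul_zero]
      | add w₁ w₂ _ _ ih1 ih2 => rw [mul_add, ih1, ih2, add_zero]
      | smul r w _ ihw => rw [smul_eq_mul, mul_left_comm, ihw, mul_zero]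
    have hker : ∀ w : Polynomial R, ρt w = 0 → C x * w = 0 := by
      intro w hw
      refine hCmap w ?_
      have : w ∈ RingHom.ker ρt := hw
      rwa [hρt, Polynomial.ker_mapRingHom, hρ, Ideal.mk_ker] at this
    have hclaim : ∀ q ∈ I ⊓ Ideal.span {C x}, q ∈ Ideal.span {h} := by
      rintro q ⟨hqI, hqx⟩
      obtain ⟨p, hp⟩ := Ideal.mem_span_singleton'.mp hqx
      have hpJ : p ∈ J := (hJ p).mpr (by rw [mul_comm, hp]; exact hqI)
      have hmm : ρt p ∈ Jbar := Ideal.mem_map_of_mem ρt hpJ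
      rw [hg] at hmm
      obtain ⟨v, hv⟩ := Ideal.mem_span_singleton'.mp hmm
      obtain ⟨u, rfl⟩ := hρtsurj v
      have hker0 : ρt (p - u * p₀) = 0 := by
        rw [map_sub, map_mul, hp₀g, hv, sub_self]
      have hz := hker _ hker0
      rw [mul_sub] at hz
      rw [Ideal.mem_span_singleton']
      refine ⟨u, ?_⟩
      have : C x * p = C x * (u * p₀) := by
        have := sub_eq_zero.mp hz
        rw [this]
      calc u * h = C x * (u * p₀) := by rw [hh]; ring
        _ = C x * p := this.symm
        _ = q := by rw [mul_comm]; exact hp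

    -- quotient ring
    set B : Ideal R := Ideal.span {x} with hB
    set φ : R →+* R ⧸ B := Ideal.Quotient.mk B with hφ
    set φt : Polynomial R →+* Polynomial (R ⧸ B) := Polynomial.mapRingHom φ with hφt
    have hφtsurj : Function.Surjective φt := Polynomial.map_surjective φ Ideal.Quotient.mk_surjective
    set e := Ideal.relIsoOfSurjective φ Ideal.Quotient.mk_surjective with he
    have hcomapbot : Ideal.comap φ ⊥ = B := by
      rw [← RingHom.ker_eq_comap_bot, hφ, Ideal.mk_ker]
    have hBle : ∀ i : ℕ, (h : i + 1 < s.length + 1) → Ideal.comap φ ⊥ ≤ s.toFun ⟨i + 1, h⟩ := by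
      intro i hi
      rw [hcomapbot, hAx, hA]
      exact s.strictMono.monotone (by simp only [Fin.le_def]; omega)
    set s' : CompositionSeries (Submodule (R ⧸ B) (R ⧸ B)) :=
      { length := n
        toFun := fun i => e.symm ⟨s.toFun ⟨i.val + 1, by omega⟩, hBle i.val (by omega)⟩
        step := fun i => by
          have hcov : s.toFun ⟨i.val + 1, by omega⟩ ⋖ s.toFun ⟨i.val + 1 + 1, by omega⟩ := by
            have hstep : s.toFun (Fin.castSucc ⟨i.val + 1, by omega⟩) ⋖
                s.toFun (Fin.succ ⟨i.val + 1, by omega⟩) := s.step ⟨i.val + 1, by omega⟩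
            exact hstep
          exact (apply_covBy_apply_iff e.symm).mpr (subtype_covBy _ _ hcov) } with hs'
    have hs'fun : ∀ i : Fin (n + 1),
        s'.toFun i = Ideal.map φ (s.toFun ⟨i.val + 1, by omega⟩) := fun i => rfl
    have hd' : s'.head = ⊥ := by
      show s'.toFun 0 = ⊥
      rw [hs'fun 0]
      have : (⟨(0 : Fin (n + 1)).val + 1, by omega⟩ : Fin (s.length + 1)) = ⟨1, h1lt⟩ :=
        Fin.ext (by simp)
      rw [this, ← hA, ← hAx]
      exact Ideal.map_quotient_self B
    have hl' : s'.last = ⊤ := by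
      show s'.toFun (Fin.last n) = ⊤
      rw [hs'fun]
      have : (⟨(Fin.last n).val + 1, by omega⟩ : Fin (s.length + 1)) = Fin.last s.length :=
        Fin.ext (by simp [hlen])
      rw [this]
      have hlast' : s.toFun (Fin.last s.length) = ⊤ := hlast
      rw [hlast']
      exact Ideal.map_top φ

    obtain ⟨t', htc, hts⟩ := ih (R ⧸ B) s' hd' hl' rfl (Ideal.map φt I)
    -- lifting
    set lift : Polynomial (R ⧸ B) → Polynomial R := fun y =>
      if hy : ∃ p, p ∈ I ∧ φt p = y then hy.choose else 0 with hliftdef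
    have hlift : ∀ y ∈ t', lift y ∈ I ∧ φt (lift y) = y := by
      intro y hy
      have hyI : y ∈ Ideal.map φt I := by
        rw [← hts]; exact Ideal.subset_span hy
      obtain ⟨p, hpI, hpy⟩ := Ideal.mem_map_iff_of_surjective φt hφtsurj |>.mp hyI
      have hex : ∃ p, p ∈ I ∧ φt p = y := ⟨p, hpI, hpy⟩
      rw [hliftdef]
      simp only [dif_pos hex]
      exact hex.choose_spec
    refine ⟨insert h (t'.image lift), ?_, ?_⟩
    · calc (insert h (t'.image lift)).card ≤ (t'.image lift).card + 1 := Finset.card_insert_le _ _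
        _ ≤ t'.card + 1 := by gcongr; exact Finset.card_image_le
        _ ≤ n + 1 := by omega
    · apply le_antisymm
      · rw [Ideal.span_le]
        intro q hq
        simp only [Finset.coe_insert, Set.mem_insert_iff, Finset.coe_image, Set.mem_image] at hq
        rcases hq with rfl | ⟨y, hy, rfl⟩
        · exact hhI
        · exact (hlift y hy).1
      · intro q hqI
        -- map φt of span of lifted generators is span t'
        have himg : ⇑φt '' (lift '' (t' : Set (Polynomial (R ⧸ B)))) = (t' : Set (Polynomial (R ⧸ B))) := by
          rw [Set.image_image]
          apply Set.EqOn.image_eq_self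
          intro y hy
          exact (hlift y hy).2
        have hmapspan : Ideal.map φt (Ideal.span (lift '' (t' : Set (Polynomial (R ⧸ B))))) =
            Ideal.map φt I := by
          rw [Ideal.map_span, himg, hts]
        have hq' : φt q ∈ Ideal.map φt (Ideal.span (lift '' (t' : Set (Polynomial (R ⧸ B))))) := by
          rw [hmapspan]; exact Ideal.mem_map_of_mem φt hqI
        obtain ⟨q₁, hq₁span, hq₁eq⟩ := Ideal.mem_map_iff_of_surjective φt hφtsurj |>.mp hq'
        have hq₁I : q₁ ∈ I := by
          refine Ideal.span_le.mpr ?_ hq₁span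
          rintro _ ⟨y, hy, rfl⟩
          exact (hlift y hy).1
        have hdiff : q - q₁ ∈ Ideal.span {C x} := by
          have : q - q₁ ∈ RingHom.ker φt := by
            rw [RingHom.mem_ker, map_sub, hq₁eq, sub_self]
          rw [hφt, Polynomial.ker_mapRingHom, hφ, Ideal.mk_ker, hB] at this
          rwa [Ideal.map_span, Set.image_singleton] at this
        have hdiffI : q - q₁ ∈ I := I.sub_mem hqI hq₁I
        have hd2 : q - q₁ ∈ Ideal.span {h} := hclaim _ ⟨hdiffI, hdiff⟩
        have : q = q₁ + (q - q₁) := by ring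
        rw [this]
        rw [Finset.coe_insert, Ideal.span_insert]
        refine Submodule.add_mem _ ?_ ?_
        · exact Ideal.mem_sup_right (by rw [Finset.coe_image]; exact hq₁span)
        · exact Ideal.mem_sup_left (Ideal.span_mono (by simp) hd2)

/-- If `𝔯` is a local Artinian ring of length `ℓ`, then every ideal of `𝔯[t]` can be
generated by at most `ℓ` elements. -/
theorem polynomial_rank_le_length (𝔯 : Type*) [CommRing 𝔯] [IsArtinianRing 𝔯]
    [IsLocalRing 𝔯] (ℓ : ℕ) (s : CompositionSeries (Submodule 𝔯 𝔯))
    (hhead : s.head = ⊥) (hlast : s.last = ⊤) (hlen : s.length = ℓ) :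
    ∀ I : Ideal (Polynomial 𝔯),
      ∃ t : Finset (Polynomial 𝔯), t.card ≤ ℓ ∧ Ideal.span (t : Set (Polynomial 𝔯)) = I :=
  aux_poly_span ℓ 𝔯 s hhead hlast hlen
end

section
/- Let p be a prime number and n ≥ 1. In the ring R = (ℤ/pⁿℤ)[t], the ideal 𝔪^{n−1}, where 𝔪 = (p, t), requires exactly n generators; that is, the minimal number of generators of the ideal (p^{n−1}, p^{n−2}t, …, p t^{n−2}, t^{n−1}) is n. Consequently every ideal of (ℤ/pⁿℤ)[t] is generated by at most n elements and this bound is attained. -/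
-- δ i x = (x.val / p^i) mod p
private def zprDelta (p n i : ℕ) (x : ZMod (p ^ n)) : ZMod p :=
  ((x.val / p ^ i : ℕ) : ZMod p)

private lemma zpr_delta_spec (p n : ℕ) (hp : p.Prime) (i : ℕ) (hi : i < n)
    (a : ZMod (p ^ n)) :
    zprDelta p n i ((p : ZMod (p ^ n)) ^ i * a) =
      ZMod.castHom (dvd_pow_self p (by omega : n ≠ 0)) (ZMod p) a := by
  haveI : NeZero (p ^ n) := ⟨pow_ne_zero n hp.ne_zero⟩
  have hx : ((p : ZMod (p ^ n)) ^ i * a) = (((p ^ i * a.val : ℕ) : ZMod (p ^ n))) := by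
    push_cast
    rw [ZMod.natCast_val, ZMod.cast_id]
  rw [zprDelta, hx, ZMod.val_natCast]
  have hpn : p ^ n = p ^ i * p ^ (n - i) := by rw [← pow_add]; congr 1; omega
  have hnat : p ^ i * a.val % p ^ n / p ^ i = a.val % p ^ (n - i) := by
    generalize a.val = v
    rw [hpn, Nat.mul_mod_mul_left, Nat.mul_div_cancel_left _ (pow_pos hp.pos i)]
  rw [hnat]
  have hdvd : p ∣ p ^ (n - i) := dvd_pow_self p (by omega)
  have : ((a.val % p ^ (n - i) : ℕ) : ZMod p) = ((a.val : ℕ) : ZMod p) := by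
    conv_rhs => rw [← Nat.mod_add_div a.val (p ^ (n - i))]
    obtain ⟨c, hc⟩ := hdvd
    push_cast [hc]
    simp
  rw [this, ZMod.castHom_apply, ZMod.natCast_val]

private lemma zpr_ker (p n : ℕ) (hp : p.Prime) (hn : 1 ≤ n) (x : ZMod (p ^ n))
    (hx : ZMod.castHom (dvd_pow_self p (by omega : n ≠ 0)) (ZMod p) x = 0) :
    (p : ZMod (p ^ n)) ∣ x := by
  haveI : NeZero (p ^ n) := ⟨pow_ne_zero n hp.ne_zero⟩
  haveI : NeZero p := ⟨hp.ne_zero⟩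
  rw [ZMod.castHom_apply, ← ZMod.natCast_val, ZMod.natCast_eq_zero_iff] at hx
  obtain ⟨c, hc⟩ := hx
  refine ⟨(c : ZMod (p ^ n)), ?_⟩
  have := ZMod.natCast_rightInverse (n := p ^ n) x
  rw [← this, hc]
  push_cast
  ring

private lemma zpr_pow_zero (p n : ℕ) (hn : 1 ≤ n) : ((p : ZMod (p ^ n))) ^ n = 0 := by
  have : ((p : ZMod (p ^ n))) ^ n = ((p ^ n : ℕ) : ZMod (p ^ n)) := by push_cast; ring
  rw [this, ZMod.natCast_self]

private lemma zpr_pi_p (p n : ℕ) (hp : p.Prime) (hn : 1 ≤ n) :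
    ZMod.castHom (dvd_pow_self p (by omega : n ≠ 0)) (ZMod p) (p : ZMod (p ^ n)) = 0 := by
  haveI : NeZero p := ⟨hp.ne_zero⟩
  rw [map_natCast, ZMod.natCast_self]

open Polynomial in
private def zprJ (p n k : ℕ) : Ideal (Polynomial (ZMod (p ^ n))) where
  carrier := {f | ∀ j, (p : ZMod (p ^ n)) ^ (k - j) ∣ f.coeff j}
  add_mem' := fun hf hg j => by
    rw [Polynomial.coeff_add]; exact dvd_add (hf j) (hg j)
  zero_mem' := fun j => by simp
  smul_mem' := fun c f hf j => by
    rw [smul_eq_mul, Polynomial.coeff_mul]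
    refine Finset.dvd_sum fun x hx => ?_
    have hx2 : x.2 ≤ j := by
      have := Finset.HasAntidiagonal.mem_antidiagonal.mp hx
      omega
    exact Dvd.dvd.mul_left ((pow_dvd_pow _ (by omega)).trans (hf x.2)) _

private lemma zpr_mem_J (p n k : ℕ) {f : Polynomial (ZMod (p ^ n))}
    (h : ∀ j, (p : ZMod (p ^ n)) ^ (k - j) ∣ f.coeff j) : f ∈ zprJ p n k := h

private lemma zpr_J_coeff (p n k : ℕ) {f : Polynomial (ZMod (p ^ n))}
    (h : f ∈ zprJ p n k) : ∀ j, (p : ZMod (p ^ n)) ^ (k - j) ∣ f.coeff j := h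

private lemma zpr_pow_le (p n k : ℕ) :
    (Ideal.span {Polynomial.C (p : ZMod (p ^ n)), Polynomial.X}) ^ k ≤ zprJ p n k := by
  induction k with
  | zero => intro f _; intro j; simpa using one_dvd _
  | succ k ih =>
    rw [pow_succ]
    refine Submodule.mul_le.mpr fun a ha b hb => ?_
    have haJ := ih ha
    rw [Ideal.mem_span_pair] at hb
    obtain ⟨u, v, rfl⟩ := hb
    have h1 : a * Polynomial.C (p : ZMod (p ^ n)) ∈ zprJ p n (k + 1) := by
      refine zpr_mem_J _ _ _ fun j => ?_
      rw [Polynomial.coeff_mul_C]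
      calc (p : ZMod (p ^ n)) ^ (k + 1 - j) ∣ (p : ZMod (p ^ n)) ^ (k - j) * (p : ZMod (p ^ n)) := by
            rw [← pow_succ]; exact pow_dvd_pow _ (by omega)
        _ ∣ a.coeff j * (p : ZMod (p ^ n)) := mul_dvd_mul (zpr_J_coeff p n k haJ j) dvd_rfl
    have h2 : a * Polynomial.X ∈ zprJ p n (k + 1) := by
      refine zpr_mem_J _ _ _ fun j => ?_
      cases j with
      | zero => simp
      | succ j =>
        rw [Polynomial.coeff_mul_X]
        exact (pow_dvd_pow _ (by omega)).trans (zpr_J_coeff p n k haJ j)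
    have heq : a * (u * Polynomial.C (p : ZMod (p ^ n)) + v * Polynomial.X)
        = u * (a * Polynomial.C (p : ZMod (p ^ n))) + v * (a * Polynomial.X) := by ring
    rw [heq]
    exact add_mem (Ideal.mul_mem_left _ _ h1) (Ideal.mul_mem_left _ _ h2)

private lemma zpr_gen (p n : ℕ) (hp : p.Prime) (hn : 1 ≤ n)
    (I : Ideal (Polynomial (ZMod (p ^ n)))) :
    ∃ s : Finset (Polynomial (ZMod (p ^ n))), s.card ≤ n ∧
      Ideal.span (s : Set (Polynomial (ZMod (p ^ n)))) = I := by
  haveI : Fact p.Prime := ⟨hp⟩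
  haveI : NeZero (p ^ n) := ⟨pow_ne_zero n hp.ne_zero⟩
  set π := ZMod.castHom (dvd_pow_self p (by omega : n ≠ 0)) (ZMod p) with hπ
  set ρ := Polynomial.mapRingHom π with hρ
  have hπs : Function.Surjective π := by
    intro y
    haveI : NeZero p := ⟨hp.ne_zero⟩
    refine ⟨((y.val : ℕ) : ZMod (p ^ n)), ?_⟩
    rw [map_natCast]
    exact ZMod.natCast_rightInverse y
  have hsurj : Function.Surjective ρ := Polynomial.map_surjective π hπs
  set Cp := Polynomial.C (p : ZMod (p ^ n)) with hCp
  -- T i = (I : p^i), K i = its image mod p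
  set T : ℕ → Ideal (Polynomial (ZMod (p ^ n))) :=
    fun i => I.colon {Cp ^ i} with hT
  set K : ℕ → Ideal (Polynomial (ZMod p)) := fun i => Ideal.map ρ (T i) with hK
  have hprin : ∀ i, ∃ h : Polynomial (ZMod (p ^ n)),
      h ∈ T i ∧ ρ h = Submodule.IsPrincipal.generator (K i) := fun i => by
    have := (Ideal.mem_map_iff_of_surjective ρ hsurj).mp
      (Submodule.IsPrincipal.generator_mem (K i))
    obtain ⟨x, hx1, hx2⟩ := this
    exact ⟨x, hx1, hx2⟩
  choose h hhT hhρ using hprin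
  refine ⟨(Finset.range n).image (fun i => Cp ^ i * h i), ?_, ?_⟩
  · exact (Finset.card_image_le).trans (by simp)
  apply le_antisymm
  · rw [Ideal.span_le]
    rintro x hx
    simp only [Finset.coe_image, Set.mem_image, Finset.mem_coe, Finset.mem_range] at hx
    obtain ⟨i, _, rfl⟩ := hx
    have := hhT i
    rw [hT] at this
    have := Submodule.mem_colon_singleton.mp this
    rwa [smul_eq_mul, mul_comm] at this
  · -- key downward induction
    have key : ∀ d : ℕ, ∀ g : Polynomial (ZMod (p ^ n)), Cp ^ (n - d) * g ∈ I →
        Cp ^ (n - d) * g ∈ Ideal.span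
          (((Finset.range n).image (fun i => Cp ^ i * h i) : Finset _) : Set _) := by
      intro d
      induction d with
      | zero =>
        intro g _
        have : Cp ^ (n - 0) = 0 := by
          rw [Nat.sub_zero, hCp, ← Polynomial.C_pow]
          have : ((p : ZMod (p ^ n))) ^ n = ((p ^ n : ℕ) : ZMod (p ^ n)) := by push_cast; ring
          rw [this, ZMod.natCast_self, Polynomial.C_0]
        rw [this, zero_mul]
        exact zero_mem _
      | succ d ih =>
        intro g hg
        by_cases hd : n ≤ d
        · have : n - (d + 1) = n - d := by omega
          rw [this] at hg ⊢
          exact ih g hg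
        push_neg at hd
        set k := n - (d + 1) with hk
        have hkn : k < n := by omega
        -- g ∈ T k
        have hgT : g ∈ T k := by
          rw [hT]
          exact Submodule.mem_colon_singleton.mpr (by rwa [smul_eq_mul, mul_comm])
        -- ρ g ∈ K k = span {generator}
        have : ρ g ∈ K k := Ideal.mem_map_of_mem ρ hgT
        rw [← Submodule.IsPrincipal.span_singleton_generator (K k)] at this
        obtain ⟨q, hq⟩ := Ideal.mem_span_singleton'.mp this
        obtain ⟨a, rfl⟩ := hsurj q
        -- g - a * h k is divisible by C p
        have hker : ρ (g - a * h k) = 0 := by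
          rw [map_sub, map_mul, hhρ k, hq, sub_self]
        have hdvd : Cp ∣ g - a * h k := by
          rw [hCp]
          rw [Polynomial.C_dvd_iff_dvd_coeff]
          intro m
          have hm : π ((g - a * h k).coeff m) = 0 := by
            have : (ρ (g - a * h k)).coeff m = 0 := by rw [hker]; simp
            rw [hρ, Polynomial.coe_mapRingHom, Polynomial.coeff_map] at this
            exact this
          exact zpr_ker p n hp hn _ hm
        obtain ⟨b, hb⟩ := hdvd
        have hgsplit : g = a * h k + Cp * b := by rw [← hb]; ring
        have hIb : Cp ^ (k + 1) * b ∈ I := by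
          have : Cp ^ (k + 1) * b = Cp ^ k * g - a * (Cp ^ k * h k) := by
            rw [hgsplit]; ring
          rw [this]
          refine Submodule.sub_mem _ hg (Ideal.mul_mem_left _ _ ?_)
          have := Submodule.mem_colon_singleton.mp (hhT k)
          rwa [smul_eq_mul, mul_comm] at this
        have hk1 : k + 1 = n - d := by omega
        rw [hk1] at hIb
        have hspanb := ih b hIb
        have hmem : Cp ^ k * h k ∈ Ideal.span
            (((Finset.range n).image (fun i => Cp ^ i * h i) : Finset _) : Set _) := by
          apply Ideal.subset_span
          simp only [Finset.coe_image, Set.mem_image, Finset.mem_coe, Finset.mem_range]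
          exact ⟨k, hkn, rfl⟩
        have : Cp ^ k * g = a * (Cp ^ k * h k) + Cp ^ (n - d) * b := by
          rw [hgsplit, ← hk1]; ring
        rw [this]
        exact add_mem (Ideal.mul_mem_left _ _ hmem) hspanb
    intro f hf
    have := key n f (by rwa [Nat.sub_self, pow_zero, one_mul])
    rwa [Nat.sub_self, pow_zero, one_mul] at this

private lemma zpr_J_coeff' (p n : ℕ) (hn : 1 ≤ n) {f : Polynomial (ZMod (p ^ n))}
    (hf : f ∈ zprJ p n (n - 1)) (i : ℕ) (hi : i < n) :
    ∃ c, f.coeff (n - 1 - i) = (p : ZMod (p ^ n)) ^ i * c := by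
  obtain ⟨c, hc⟩ := zpr_J_coeff p n (n - 1) hf (n - 1 - i)
  have he : (n - 1) - (n - 1 - i) = i := by omega
  rw [he] at hc
  exact ⟨c, hc⟩

private lemma zpr_delta_mul (p n : ℕ) (hp : p.Prime) (hn : 1 ≤ n)
    (r f : Polynomial (ZMod (p ^ n))) (hf : f ∈ zprJ p n (n - 1)) (i : ℕ) (hi : i < n) :
    zprDelta p n i ((r * f).coeff (n - 1 - i)) =
      ZMod.castHom (dvd_pow_self p (by omega : n ≠ 0)) (ZMod p) (r.coeff 0) *
        zprDelta p n i (f.coeff (n - 1 - i)) := by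
  obtain ⟨c, hc⟩ := zpr_J_coeff' p n hn hf i hi
  have hX : Polynomial.X ∣ (r - Polynomial.C (r.coeff 0)) :=
    Polynomial.X_dvd_iff.mpr (by simp)
  obtain ⟨q, hq⟩ := hX
  have hr : r = Polynomial.C (r.coeff 0) + Polynomial.X * q := by rw [← hq]; ring
  have hqf : q * f ∈ zprJ p n (n - 1) := Ideal.mul_mem_left _ _ hf
  have hE : ∃ d, (Polynomial.X * (q * f)).coeff (n - 1 - i) = (p : ZMod (p ^ n)) ^ (i + 1) * d := by
    rcases Nat.eq_zero_or_pos (n - 1 - i) with hm | hm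
    · refine ⟨0, ?_⟩
      rw [hm, Polynomial.mul_coeff_zero]
      simp
    · obtain ⟨m', hm'⟩ : ∃ m', n - 1 - i = m' + 1 := ⟨n - 1 - i - 1, by omega⟩
      rw [hm', Polynomial.coeff_X_mul]
      obtain ⟨d, hd⟩ := zpr_J_coeff p n (n - 1) hqf m'
      have he : (n - 1) - m' = i + 1 := by omega
      rw [he] at hd
      exact ⟨d, hd⟩
  obtain ⟨d, hd⟩ := hE
  have hcoeff : (r * f).coeff (n - 1 - i) =
      (p : ZMod (p ^ n)) ^ i * (r.coeff 0 * c + (p : ZMod (p ^ n)) * d) := by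
    conv_lhs => rw [hr]
    rw [add_mul, Polynomial.coeff_add, mul_assoc, hd, Polynomial.coeff_C_mul, hc]
    ring
  rw [hcoeff, hc, zpr_delta_spec p n hp i hi, zpr_delta_spec p n hp i hi]
  rw [map_add, map_mul, map_mul, map_natCast]
  haveI : NeZero p := ⟨hp.ne_zero⟩
  have hp0 : ((p : ℕ) : ZMod p) = 0 := ZMod.natCast_self p
  simp [hp0]

private lemma zpr_delta_add (p n : ℕ) (hp : p.Prime) (hn : 1 ≤ n)
    {f g : Polynomial (ZMod (p ^ n))} (hf : f ∈ zprJ p n (n - 1)) (hg : g ∈ zprJ p n (n - 1))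
    (i : ℕ) (hi : i < n) :
    zprDelta p n i ((f + g).coeff (n - 1 - i)) =
      zprDelta p n i (f.coeff (n - 1 - i)) + zprDelta p n i (g.coeff (n - 1 - i)) := by
  obtain ⟨c, hc⟩ := zpr_J_coeff' p n hn hf i hi
  obtain ⟨c', hc'⟩ := zpr_J_coeff' p n hn hg i hi
  rw [Polynomial.coeff_add, hc, hc', ← mul_add,
    zpr_delta_spec p n hp i hi, zpr_delta_spec p n hp i hi, zpr_delta_spec p n hp i hi,
    map_add]

private lemma zpr_delta_sum (p n : ℕ) (hp : p.Prime) (hn : 1 ≤ n)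
    (s : Finset (Polynomial (ZMod (p ^ n)))) (F : Polynomial (ZMod (p ^ n)) → Polynomial (ZMod (p ^ n)))
    (hF : ∀ j ∈ s, F j ∈ zprJ p n (n - 1)) (i : ℕ) (hi : i < n) :
    zprDelta p n i ((∑ j ∈ s, F j).coeff (n - 1 - i)) =
      ∑ j ∈ s, zprDelta p n i ((F j).coeff (n - 1 - i)) := by
  haveI : NeZero (p ^ n) := ⟨pow_ne_zero n hp.ne_zero⟩
  revert hF
  induction s using Finset.cons_induction with
  | empty =>
    intro _
    simp [zprDelta, ZMod.val_zero]
  | cons a t ha ih =>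
    intro hF
    rw [Finset.sum_cons, Finset.sum_cons]
    rw [zpr_delta_add p n hp hn (hF a (Finset.mem_cons_self a t))
      (Submodule.sum_mem _ fun j hj => hF j (Finset.mem_cons_of_mem hj)) i hi]
    rw [ih (fun j hj => hF j (Finset.mem_cons_of_mem hj))]

private lemma zpr_not_gen (p n : ℕ) (hp : p.Prime) (hn : 1 ≤ n)
    (s : Finset (Polynomial (ZMod (p ^ n)))) (hcard : s.card ≤ n - 1)
    (hspan : Ideal.span (s : Set (Polynomial (ZMod (p ^ n)))) =
      (Ideal.span {Polynomial.C ((p : ZMod (p ^ n))), Polynomial.X}) ^ (n - 1)) : False := by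
  classical
  haveI : Fact p.Prime := ⟨hp⟩
  haveI : NeZero (p ^ n) := ⟨pow_ne_zero n hp.ne_zero⟩
  set 𝔪 := Ideal.span {Polynomial.C ((p : ZMod (p ^ n))), Polynomial.X} with h𝔪
  set Φ : Polynomial (ZMod (p ^ n)) → (Fin n → ZMod p) :=
    fun f i => zprDelta p n (i : ℕ) (f.coeff (n - 1 - (i : ℕ))) with hΦ
  have hsJ : ∀ j ∈ s, j ∈ zprJ p n (n - 1) := fun j hj =>
    zpr_pow_le p n (n - 1) (hspan ▸ Ideal.subset_span hj)
  have hmain : ∀ f ∈ 𝔪 ^ (n - 1), Φ f ∈ Submodule.span (ZMod p) (Φ '' ↑s) := by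
    intro f hf
    rw [← hspan] at hf
    obtain ⟨r, -, hr⟩ := Submodule.mem_span_finset.mp hf
    simp only [smul_eq_mul] at hr
    have hfs : Φ f = ∑ j ∈ s,
        (ZMod.castHom (dvd_pow_self p (by omega : n ≠ 0)) (ZMod p) ((r j).coeff 0)) • Φ j := by
      funext i
      rw [← hr]
      simp only [hΦ]
      rw [zpr_delta_sum p n hp hn s (fun j => r j * j)
        (fun j hj => Ideal.mul_mem_left _ _ (hsJ j hj)) (i : ℕ) i.2]
      rw [Finset.sum_apply]
      refine Finset.sum_congr rfl fun j hj => ?_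
      rw [Pi.smul_apply, smul_eq_mul, zpr_delta_mul p n hp hn (r j) j (hsJ j hj) (i : ℕ) i.2]
    rw [hfs]
    exact Submodule.sum_mem _ fun j hj => Submodule.smul_mem _ _
      (Submodule.subset_span (Set.mem_image_of_mem _ (Finset.mem_coe.mpr hj)))
  have hsingle : ∀ i0 : Fin n,
      Pi.single i0 (1 : ZMod p) ∈ Submodule.span (ZMod p) (Φ '' ↑s) := by
    intro i0
    have hmem : (Polynomial.C ((p : ZMod (p ^ n)))) ^ (i0 : ℕ) *
        Polynomial.X ^ (n - 1 - (i0 : ℕ)) ∈ 𝔪 ^ (n - 1) := by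
      have h1 := Ideal.pow_mem_pow
        (show Polynomial.C ((p : ZMod (p ^ n))) ∈ 𝔪 from Ideal.subset_span (by simp)) (i0 : ℕ)
      have h2 := Ideal.pow_mem_pow
        (show (Polynomial.X : Polynomial (ZMod (p ^ n))) ∈ 𝔪 from Ideal.subset_span (by simp))
        (n - 1 - (i0 : ℕ))
      have h3 := Ideal.mul_mem_mul h1 h2
      have := i0.2
      rwa [← pow_add, (by omega : (i0 : ℕ) + (n - 1 - (i0 : ℕ)) = n - 1)] at h3
    have hΦval : Φ ((Polynomial.C ((p : ZMod (p ^ n)))) ^ (i0 : ℕ) *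
        Polynomial.X ^ (n - 1 - (i0 : ℕ))) = Pi.single i0 1 := by
      funext i
      simp only [hΦ]
      rw [← Polynomial.C_pow, Polynomial.coeff_C_mul, Polynomial.coeff_X_pow]
      by_cases h : i = i0
      · subst h
        rw [if_pos rfl, mul_one]
        have h1 : ((p : ZMod (p ^ n))) ^ (i : ℕ) = ((p : ZMod (p ^ n))) ^ (i : ℕ) * 1 := by ring
        rw [h1, zpr_delta_spec p n hp (i : ℕ) i.2, map_one, Pi.single_apply, if_pos rfl]
      · have hne : ¬ (n - 1 - (i : ℕ) = n - 1 - (i0 : ℕ)) := by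
          have := i.2; have := i0.2
          intro hcon
          exact h (Fin.ext (by omega))
        rw [if_neg hne, mul_zero]
        have h0 : (0 : ZMod (p ^ n)) = ((p : ZMod (p ^ n))) ^ (i : ℕ) * 0 := by ring
        rw [h0, zpr_delta_spec p n hp (i : ℕ) i.2, map_zero, Pi.single_apply, if_neg h]
    rw [← hΦval]
    exact hmain _ hmem
  have htop : Submodule.span (ZMod p) (Φ '' ↑s) = ⊤ := by
    rw [eq_top_iff]
    intro x _
    have hx : x = ∑ i : Fin n, x i • (Pi.single i (1 : ZMod p) : Fin n → ZMod p) := by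
      conv_lhs => rw [← Finset.univ_sum_single x]
      refine Finset.sum_congr rfl fun i _ => ?_
      funext i'
      rw [Pi.smul_apply, Pi.single_apply, Pi.single_apply, smul_eq_mul]
      split <;> simp
    rw [hx]
    exact Submodule.sum_mem _ fun i _ => Submodule.smul_mem _ _ (hsingle i)
  have h1 : Set.finrank (ZMod p) (↑(s.image Φ) : Set (Fin n → ZMod p)) ≤ (s.image Φ).card :=
    finrank_span_finset_le_card _
  have h2 : (s.image Φ).card ≤ n - 1 := (Finset.card_image_le).trans hcard
  have h3 : (↑(s.image Φ) : Set (Fin n → ZMod p)) = Φ '' ↑s := Finset.coe_image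
  rw [h3] at h1
  unfold Set.finrank at h1
  rw [htop, finrank_top, Module.finrank_pi, Fintype.card_fin] at h1
  omega
/-- In `(ℤ/pⁿℤ)[t]` with `𝔪 = (p, t)`, the ideal `𝔪^{n-1}` requires exactly `n`
generators, and every ideal is generated by at most `n` elements. -/
theorem zmod_polynomial_rank (p n : ℕ) (hp : p.Prime) (hn : 1 ≤ n)
    (𝔪 : Ideal (Polynomial (ZMod (p ^ n))))
    (h𝔪 : 𝔪 = Ideal.span {Polynomial.C (p : ZMod (p ^ n)), Polynomial.X}) :
    (∃ s : Finset (Polynomial (ZMod (p ^ n))), s.card ≤ n ∧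
        Ideal.span (s : Set (Polynomial (ZMod (p ^ n)))) = 𝔪 ^ (n - 1)) ∧
      (¬ ∃ s : Finset (Polynomial (ZMod (p ^ n))), s.card ≤ n - 1 ∧
        Ideal.span (s : Set (Polynomial (ZMod (p ^ n)))) = 𝔪 ^ (n - 1)) ∧
      ∀ I : Ideal (Polynomial (ZMod (p ^ n))),
        ∃ s : Finset (Polynomial (ZMod (p ^ n))), s.card ≤ n ∧
          Ideal.span (s : Set (Polynomial (ZMod (p ^ n)))) = I := by
  refine ⟨zpr_gen p n hp hn (𝔪 ^ (n - 1)), ?_, fun I => zpr_gen p n hp hn I⟩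
  rintro ⟨s, hcard, hspan⟩
  exact zpr_not_gen p n hp hn s hcard (by rwa [h𝔪] at hspan)
end

section
/- Let 𝔯 be a local Artinian principal ring with maximal ideal generated by π and of length (= nilpotency index) n. Then in R = 𝔯[t], with 𝔪 = (π, t), we have dim_k 𝔪^{n−1}/𝔪^{n} = n where k = 𝔯/(π); hence 𝔪^{n−1} requires exactly n generators. -/
set_option synthInstance.maxHeartbeats 1000000
set_option maxHeartbeats 2000000

open Polynomial

lemma aux_coeff_dvd {A : Type*} [CommRing A] (a : A) (m : ℕ) :
    ∀ f ∈ (Ideal.span {C a, X} : Ideal A[X]) ^ m, ∀ d, a ^ (m - d) ∣ f.coeff d := by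
  induction m with
  | zero => intro f _ d; simp
  | succ m ih =>
    intro f hf
    rw [pow_succ] at hf
    refine Submodule.mul_induction_on hf (fun r hr s hs d => ?_)
      (fun x y hx hy d => by simpa [coeff_add] using dvd_add (hx d) (hy d))
    rw [coeff_mul]
    refine Finset.dvd_sum fun x hx => ?_
    rw [Finset.HasAntidiagonal.mem_antidiagonal] at hx
    rcases Nat.eq_zero_or_pos x.2 with h2 | h2
    · have hs0 : a ∣ s.coeff 0 := by
        rw [Ideal.mem_span_pair] at hs
        obtain ⟨u, v, rfl⟩ := hs
        have : (v * X).coeff 0 = 0 := by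
          simpa using coeff_mul_X_pow' v 1 0
        simp [coeff_add, coeff_mul_C, this]
      have hd : x.1 = d := by omega
      subst hd
      rw [h2]
      refine (pow_dvd_pow a (show m + 1 - x.1 ≤ (m - x.1) + 1 by omega)).trans ?_
      rw [pow_succ]
      exact mul_dvd_mul (ih r hr x.1) hs0
    · exact (pow_dvd_pow a (show m + 1 - d ≤ m - x.1 by omega)).trans ((ih r hr x.1).mul_right _)

lemma aux_span_pow {A : Type*} [CommRing A] (a b : A) (m : ℕ) :
    Ideal.span ((fun i => a ^ i * b ^ (m - i)) '' Set.Iic m)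
      = (Ideal.span {a, b}) ^ m := by
  induction m with
  | zero =>
    rw [show Set.Iic 0 = {(0 : ℕ)} by ext x; simp [Nat.le_zero], Set.image_singleton]
    simp [Ideal.span_singleton_one]
  | succ m ih =>
    rw [pow_succ, ← ih, Ideal.span_mul_span']
    apply le_antisymm
    · rw [Ideal.span_le]
      rintro z ⟨i, hi, rfl⟩
      simp only [Set.mem_Iic] at hi
      apply Ideal.subset_span
      rcases Nat.eq_zero_or_pos i with rfl | hpos
      · refine ⟨a ^ 0 * b ^ m, Set.mem_image_of_mem _ (by simp), b, by simp, ?_⟩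
        beta_reduce; rw [Nat.sub_zero]; ring
      · obtain ⟨j, rfl⟩ : ∃ j, i = j + 1 := ⟨i - 1, by omega⟩
        refine ⟨a ^ j * b ^ (m - j), Set.mem_image_of_mem _ (by simp; omega), a, by simp, ?_⟩
        beta_reduce; rw [show m + 1 - (j + 1) = m - j by omega]; ring
    · rw [Ideal.span_le]
      rintro z ⟨x, hx, y, hy, rfl⟩
      obtain ⟨i, hi, rfl⟩ := hx
      simp only [Set.mem_Iic] at hi
      apply Ideal.subset_span
      rcases hy with rfl | rfl
      · exact ⟨i + 1, by simp; omega, by beta_reduce; rw [show m + 1 - (i + 1) = m - i by omega]; ring⟩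
      · exact ⟨i, by simp; omega, by beta_reduce; rw [show m + 1 - i = (m - i) + 1 by omega]; ring⟩

lemma aux_ker' {𝔯 : Type*} [CommRing 𝔯] (π : 𝔯) :
    RingHom.ker ((Ideal.Quotient.mk (Ideal.span {π})).comp (Polynomial.evalRingHom (0 : 𝔯)))
      = Ideal.span {C π, X} := by
  ext f
  rw [RingHom.mem_ker, RingHom.comp_apply, coe_evalRingHom, Ideal.Quotient.eq_zero_iff_mem,
    ← coeff_zero_eq_eval_zero, Ideal.mem_span_singleton]
  constructor
  · rintro ⟨c, hc⟩
    obtain ⟨g, hg⟩ : X ∣ (f - C (f.coeff 0)) := X_dvd_iff.mpr (by simp)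
    rw [Ideal.mem_span_pair]
    refine ⟨C c, g, ?_⟩
    have : f = C (f.coeff 0) + (f - C (f.coeff 0)) := by ring
    rw [this, hg, hc]
    rw [← C_mul]
    ring
  · intro hf
    rw [Ideal.mem_span_pair] at hf
    obtain ⟨u, v, rfl⟩ := hf
    have h1 : (v * X).coeff 0 = 0 := by simpa using coeff_mul_X_pow' v 1 0
    refine ⟨u.coeff 0, ?_⟩
    simp [coeff_add, coeff_mul_C, h1, mul_comm]

lemma aux_ann {𝔯 : Type*} [CommRing 𝔯] [IsLocalRing 𝔯] (π : 𝔯)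
    (hπ : IsLocalRing.maximalIdeal 𝔯 = Ideal.span {π}) (n : ℕ)
    (hnilp' : π ^ (n - 1) ≠ 0) (i : ℕ) (hi : i ≤ n - 1) (x : 𝔯) (hx : x * π ^ i = 0) :
    π ∣ x := by
  by_contra h
  have hxm : x ∉ IsLocalRing.maximalIdeal 𝔯 := by
    rw [hπ, Ideal.mem_span_singleton]; exact h
  have hu : IsUnit x := by
    by_contra hnu
    exact hxm (IsLocalRing.mem_maximalIdeal x |>.mpr hnu)
  obtain ⟨u, rfl⟩ := hu
  have hz : π ^ i = 0 := by
    have := congrArg (fun y => (↑u⁻¹ : 𝔯) * y) hx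
    simpa [← mul_assoc] using this
  apply hnilp'
  rw [show n - 1 = i + (n - 1 - i) by omega, pow_add, hz, zero_mul]

/-- Let `𝔯` be a local Artinian principal ring with maximal ideal `(π)` and length
(= nilpotency index) `n`.  In `R = 𝔯[t]` with `𝔪 = (π, t)` and `k = 𝔯/(π)`, we have
`dim_k 𝔪^{n-1}/𝔪^n = n`; hence `𝔪^{n-1}` requires exactly `n` generators. -/
theorem local_principal_artinian_polynomial (𝔯 : Type*) [CommRing 𝔯] [IsArtinianRing 𝔯]
    [IsLocalRing 𝔯] [IsPrincipalIdealRing 𝔯] (π : 𝔯)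
    (hπ : IsLocalRing.maximalIdeal 𝔯 = Ideal.span {π}) (n : ℕ) (hn : 1 ≤ n)
    (hnilp : π ^ n = 0) (hnilp' : π ^ (n - 1) ≠ 0)
    (s : CompositionSeries (Submodule 𝔯 𝔯))
    (hhead : s.head = ⊥) (hlast : s.last = ⊤) (hlen : s.length = n)
    (𝔪 : Ideal (Polynomial 𝔯))
    (h𝔪 : 𝔪 = Ideal.span {Polynomial.C π, Polynomial.X}) :
    Nonempty ((Polynomial 𝔯 ⧸ 𝔪) ≃+* 𝔯 ⧸ Ideal.span {π}) ∧
      Module.finrank (Polynomial 𝔯 ⧸ 𝔪)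
        ((𝔪 ^ (n - 1) : Ideal (Polynomial 𝔯)) ⧸
          (𝔪 • (⊤ : Submodule (Polynomial 𝔯) (𝔪 ^ (n - 1) : Ideal (Polynomial 𝔯))))) = n ∧
      (∃ t : Finset (Polynomial 𝔯), t.card ≤ n ∧
        Ideal.span (t : Set (Polynomial 𝔯)) = 𝔪 ^ (n - 1)) ∧
      ¬ ∃ t : Finset (Polynomial 𝔯), t.card ≤ n - 1 ∧
        Ideal.span (t : Set (Polynomial 𝔯)) = 𝔪 ^ (n - 1) := by
  classical
  subst h𝔪
  set 𝔪 : Ideal (Polynomial 𝔯) := Ideal.span {Polynomial.C π, Polynomial.X} with h𝔪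
  -- the ring equivalence
  have hsurj : Function.Surjective
      ((Ideal.Quotient.mk (Ideal.span {π})).comp (Polynomial.evalRingHom (0 : 𝔯))) := by
    intro y
    obtain ⟨c, rfl⟩ := Ideal.Quotient.mk_surjective y
    exact ⟨Polynomial.C c, by simp⟩
  have e : (Polynomial 𝔯 ⧸ 𝔪) ≃+* 𝔯 ⧸ Ideal.span {π} :=
    (Ideal.quotEquivOfEq (aux_ker' π).symm).trans
      (RingHom.quotientKerEquivOfSurjective hsurj)
  -- maximality of 𝔪 and field structure on the quotient
  have hfield : IsField (𝔯 ⧸ Ideal.span {π}) := by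
    rw [← hπ]
    letI := Ideal.Quotient.field (IsLocalRing.maximalIdeal 𝔯)
    exact Field.toIsField _
  have hK : IsField (Polynomial 𝔯 ⧸ 𝔪) := MulEquiv.isField hfield e.toMulEquiv
  haveI hmax : 𝔪.IsMaximal := Ideal.Quotient.maximal_of_isField _ hK
  letI : Field (Polynomial 𝔯 ⧸ 𝔪) := Ideal.Quotient.field 𝔪
  -- monomial generators
  have hIic : (fun i => Polynomial.C π ^ i * Polynomial.X ^ (n - 1 - i)) '' Set.Iic (n-1)
      = ↑((Finset.range n).image (fun i => Polynomial.C π ^ i * Polynomial.X ^ (n - 1 - i))) := by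
    have : Set.Iic (n - 1) = Set.Iio n := by ext x; simp; omega
    rw [Finset.coe_image, Finset.coe_range, this]
  have hpow : Ideal.span
      ((fun i => Polynomial.C π ^ i * Polynomial.X ^ (n - 1 - i)) '' Set.Iic (n-1)) = 𝔪 ^ (n-1) :=
    aux_span_pow _ _ _
  have hmem : ∀ i : ℕ, i ≤ n - 1 →
      Polynomial.C π ^ i * Polynomial.X ^ (n - 1 - i) ∈ 𝔪 ^ (n - 1) := by
    intro i hi
    rw [← hpow]
    exact Ideal.subset_span ⟨i, hi, rfl⟩
  -- the quotient module and its basis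
  set N := (𝔪 • (⊤ : Submodule (Polynomial 𝔯) (𝔪 ^ (n - 1) : Ideal (Polynomial 𝔯)))) with hN
  let w : Fin n → (𝔪 ^ (n - 1) : Ideal (Polynomial 𝔯)) := fun i =>
    ⟨Polynomial.C π ^ (i : ℕ) * Polynomial.X ^ (n - 1 - (i : ℕ)), hmem i (by omega)⟩
  let v : Fin n → ((𝔪 ^ (n - 1) : Ideal (Polynomial 𝔯)) ⧸ N) := fun i =>
    Submodule.Quotient.mk (w i)
  have hsp : ⊤ ≤ Submodule.span (Polynomial 𝔯 ⧸ 𝔪) (Set.range v) := by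
    rintro x -
    obtain ⟨⟨y, hy⟩, rfl⟩ := Submodule.Quotient.mk_surjective _ x
    have hy' : y ∈ Ideal.span
        ((fun i => Polynomial.C π ^ i * Polynomial.X ^ (n - 1 - i)) '' Set.Iic (n - 1)) := by
      rw [hpow]; exact hy
    refine Submodule.span_induction
      (p := fun z hz => (Submodule.Quotient.mk ⟨z, hpow ▸ hz⟩ : _ ⧸ N) ∈
        Submodule.span (Polynomial 𝔯 ⧸ 𝔪) (Set.range v))
      (fun z hz0 => ?_) ?_ (fun z₁ z₂ h₁ h₂ hp₁ hp₂ => ?_) (fun r z hz hp => ?_) hy'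
    · obtain ⟨i, hi, rfl⟩ := hz0
      simp only [Set.mem_Iic] at hi
      exact Submodule.subset_span ⟨⟨i, by omega⟩, rfl⟩
    · exact Submodule.zero_mem _
    · exact Submodule.add_mem _ hp₁ hp₂
    · exact Submodule.smul_mem _ (Ideal.Quotient.mk 𝔪 r) hp
  have hli : LinearIndependent (Polynomial 𝔯 ⧸ 𝔪) v := by
    rw [Fintype.linearIndependent_iff]
    intro g hg i
    choose a ha using fun j => Ideal.Quotient.mk_surjective (I := 𝔪) (g j)
    have hsum : (Submodule.Quotient.mk (∑ j, a j • w j) : _ ⧸ N) = 0 := by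
      have h1 : ∀ j, (Submodule.Quotient.mk (a j • w j) : _ ⧸ N) = g j • v j := by
        intro j; rw [← ha j]; rfl
      calc (Submodule.Quotient.mk (∑ j, a j • w j) : _ ⧸ N)
          = ∑ j, (Submodule.Quotient.mk (a j • w j) : _ ⧸ N) := map_sum N.mkQ _ _
        _ = ∑ j, g j • v j := by simp only [h1]
        _ = 0 := hg
    have hmemN : (∑ j, a j • w j) ∈ N := (Submodule.Quotient.mk_eq_zero N).mp hsum
    have hmapN : Submodule.map (𝔪 ^ (n - 1) : Ideal (Polynomial 𝔯)).subtype N = 𝔪 ^ n := by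
      rw [hN, Submodule.map_smul'', Submodule.map_top, Submodule.range_subtype,
        Ideal.smul_eq_mul, ← pow_succ']
      congr 1
      omega
    have hF : ((∑ j, a j • w j : (𝔪 ^ (n - 1) : Ideal (Polynomial 𝔯))) : Polynomial 𝔯)
        ∈ 𝔪 ^ n := by
      rw [← hmapN]; exact Submodule.mem_map_of_mem hmemN
    have hcoe : ((∑ j, a j • w j : (𝔪 ^ (n - 1) : Ideal (Polynomial 𝔯))) : Polynomial 𝔯)
        = ∑ j : Fin n, a j * (Polynomial.C π ^ (j : ℕ) * Polynomial.X ^ (n - 1 - (j : ℕ))) := by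
      simp [w]
    set f : Fin n → 𝔯 := fun j =>
      if n - 1 - (j : ℕ) ≤ n - 1 - (i : ℕ) then
        (a j).coeff ((n - 1 - (i : ℕ)) - (n - 1 - (j : ℕ))) * π ^ (j : ℕ) else 0 with hf
    have hterm : ∀ j : Fin n,
        (a j * (Polynomial.C π ^ (j : ℕ) * Polynomial.X ^ (n - 1 - (j : ℕ)))).coeff
          (n - 1 - (i : ℕ)) = f j := by
      intro j
      rw [show a j * (Polynomial.C π ^ (j : ℕ) * Polynomial.X ^ (n - 1 - (j : ℕ)))
          = (a j * Polynomial.C (π ^ (j : ℕ))) * Polynomial.X ^ (n - 1 - (j : ℕ)) by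
        rw [map_pow]; ring]
      rw [Polynomial.coeff_mul_X_pow', hf]
      beta_reduce
      split_ifs with h
      · rw [Polynomial.coeff_mul_C]
      · rfl
    have hco : ((∑ j, a j • w j : (𝔪 ^ (n - 1) : Ideal (Polynomial 𝔯))) : Polynomial 𝔯).coeff
        (n - 1 - (i : ℕ)) = ∑ j : Fin n, f j := by
      rw [hcoe, Polynomial.finset_sum_coeff]
      exact Finset.sum_congr rfl fun j _ => hterm j
    have h1 : π ^ ((i : ℕ) + 1) ∣ ∑ j : Fin n, f j := by
      rw [← hco]
      have := aux_coeff_dvd π n _ hF (n - 1 - (i : ℕ))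
      rwa [show n - (n - 1 - (i : ℕ)) = (i : ℕ) + 1 by omega] at this
    have h2 : π ^ ((i : ℕ) + 1) ∣ ∑ j ∈ Finset.univ.erase i, f j := by
      refine Finset.dvd_sum fun j hj => ?_
      have hji : j ≠ i := Finset.ne_of_mem_erase hj
      rw [hf]
      by_cases hc : (j : ℕ) ≤ (i : ℕ)
      · have hlt : (j : ℕ) < (i : ℕ) := by
          rcases lt_or_eq_of_le hc with h | h
          · exact h
          · exact absurd (Fin.ext h) hji
        beta_reduce
        rw [if_neg (by omega)]
        exact dvd_zero _
      · beta_reduce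
        rw [if_pos (by omega)]
        exact Dvd.dvd.mul_left (pow_dvd_pow π (by omega)) _
    have hfi : f i = (a i).coeff 0 * π ^ (i : ℕ) := by
      rw [hf]
      beta_reduce
      rw [if_pos le_rfl, Nat.sub_self]
    have hdvd' : π ^ ((i : ℕ) + 1) ∣ (a i).coeff 0 * π ^ (i : ℕ) := by
      rw [← hfi]
      have hsplit := Finset.add_sum_erase Finset.univ f (Finset.mem_univ i)
      have : f i = (∑ j : Fin n, f j) - ∑ j ∈ Finset.univ.erase i, f j := by
        rw [← hsplit]; ring
      rw [this]
      exact dvd_sub h1 h2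
    obtain ⟨u, hu⟩ := hdvd'
    have hz : ((a i).coeff 0 - π * u) * π ^ (i : ℕ) = 0 := by
      rw [sub_mul, hu, pow_succ]; ring
    have hdc : π ∣ (a i).coeff 0 - π * u :=
      aux_ann π hπ n hnilp' (i : ℕ) (by omega) _ hz
    have hc0 : π ∣ (a i).coeff 0 := by
      have := dvd_add hdc (Dvd.intro u rfl)
      simpa using this
    have hai : a i ∈ 𝔪 := by
      rw [h𝔪, ← aux_ker' π, RingHom.mem_ker, RingHom.comp_apply, coe_evalRingHom,
        Ideal.Quotient.eq_zero_iff_mem, ← coeff_zero_eq_eval_zero, Ideal.mem_span_singleton]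
      exact hc0
    rw [← ha i, Ideal.Quotient.eq_zero_iff_mem]
    exact hai
  let b : Module.Basis (Fin n) (Polynomial 𝔯 ⧸ 𝔪) _ := Module.Basis.mk hli hsp
  refine ⟨⟨e⟩, ?_, ?_, ?_⟩
  · rw [Module.finrank_eq_card_basis b, Fintype.card_fin]
  · refine ⟨(Finset.range n).image (fun i => Polynomial.C π ^ i * Polynomial.X ^ (n - 1 - i)),
      le_trans (Finset.card_image_le) (by simp), ?_⟩
    rw [← hIic, hpow]
  · rintro ⟨t, htc, hts⟩
    let F : Polynomial 𝔯 → ((𝔪 ^ (n - 1) : Ideal (Polynomial 𝔯)) ⧸ N) := fun z =>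
      if h : z ∈ 𝔪 ^ (n - 1) then Submodule.Quotient.mk ⟨z, h⟩ else 0
    have hspan : Submodule.span (Polynomial 𝔯 ⧸ 𝔪)
        (↑(t.image F) : Set ((𝔪 ^ (n - 1) : Ideal (Polynomial 𝔯)) ⧸ N)) = ⊤ := by
      rw [eq_top_iff]
      rintro x -
      obtain ⟨⟨y, hy⟩, rfl⟩ := Submodule.Quotient.mk_surjective _ x
      have hy' : y ∈ Ideal.span (↑t : Set (Polynomial 𝔯)) := by rw [hts]; exact hy
      refine Submodule.span_induction
        (p := fun z hz => ∀ h : z ∈ 𝔪 ^ (n - 1), (Submodule.Quotient.mk ⟨z, h⟩ : _ ⧸ N) ∈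
          Submodule.span (Polynomial 𝔯 ⧸ 𝔪)
            (↑(t.image F) : Set ((𝔪 ^ (n - 1) : Ideal (Polynomial 𝔯)) ⧸ N)))
        (fun z hz0 h => ?_) (fun h => ?_) (fun z₁ z₂ h₁ h₂ hp₁ hp₂ h => ?_)
        (fun r z hz hp h => ?_) hy' hy
      · refine Submodule.subset_span ?_
        rw [Finset.coe_image]
        refine ⟨z, hz0, ?_⟩
        simp only [F]
        rw [dif_pos h]
      · exact Submodule.zero_mem _
      · have hm₁ : z₁ ∈ 𝔪 ^ (n - 1) := by rw [← hts]; exact h₁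
        have hm₂ : z₂ ∈ 𝔪 ^ (n - 1) := by rw [← hts]; exact h₂
        exact Submodule.add_mem _ (hp₁ hm₁) (hp₂ hm₂)
      · have hm : z ∈ 𝔪 ^ (n - 1) := by rw [← hts]; exact hz
        exact Submodule.smul_mem _ (Ideal.Quotient.mk 𝔪 r) (hp hm)
    haveI : Fintype (↑(↑(t.image F) : Set ((𝔪 ^ (n - 1) : Ideal (Polynomial 𝔯)) ⧸ N))) :=
      FinsetCoe.fintype _
    have hcard := Basis.le_span'' b hspan
    have h1 : n ≤ (t.image F).card := by simpa using hcard
    have h2 : (t.image F).card ≤ t.card := Finset.card_image_le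
    omega
end

section
/- Let S be a discrete valuation ring with residue field l, let k be a subfield of l with [l : k] = d finite, let q : S → l be the quotient map, and let R = q⁻¹(k). Then R is a local ring whose maximal ideal 𝔪 equals the maximal ideal of S, R/𝔪 ≅ k, and dim_k 𝔪/𝔪² = d. -/
set_option synthInstance.maxHeartbeats 1000000
set_option maxHeartbeats 2000000

/-- Let `S` be a DVR with residue field `l`, `k` a subfield of `l` with `[l : k] = d`,
`q : S → l` the quotient map, and `R = q⁻¹(k)`.  Then `R` is local, its maximal ideal `𝔪`
is (the preimage in `R` of) the maximal ideal of `S`, `R/𝔪 ≅ k`, and `dim_k 𝔪/𝔪² = d`. -/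
theorem pullback_of_dvr_residue_subfield (S : Type*) [CommRing S] [IsDomain S]
    [IsDiscreteValuationRing S] (k : Subfield (IsLocalRing.ResidueField S)) (d : ℕ)
    (hd : Module.finrank k (IsLocalRing.ResidueField S) = d)
    (R : Subring S)
    (hR : R = Subring.comap (IsLocalRing.residue S) k.toSubring)
    (𝔪 : Ideal R)
    (h𝔪 : ∀ x : R, x ∈ 𝔪 ↔ (x : S) ∈ IsLocalRing.maximalIdeal S) :
    IsLocalRing R ∧ 𝔪.IsMaximal ∧ (∀ I : Ideal R, I ≠ ⊤ → I ≤ 𝔪) ∧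
      Nonempty ((R ⧸ 𝔪) ≃+* k) ∧
      Module.finrank (R ⧸ 𝔪) 𝔪.Cotangent = d := by
  classical
  have hmemR : ∀ s : S, s ∈ R ↔ IsLocalRing.residue S s ∈ k := by
    intro s
    rw [hR]
    exact Iff.rfl
  have hmS_R : ∀ s : S, s ∈ IsLocalRing.maximalIdeal S → s ∈ R := by
    intro s hs
    rw [hmemR]
    rw [show IsLocalRing.residue S s = 0 from Ideal.Quotient.eq_zero_iff_mem.mpr hs]
    exact zero_mem k
  -- elements of R not in the maximal ideal of S are units of R
  have hunit : ∀ x : R, (x : S) ∉ IsLocalRing.maximalIdeal S → IsUnit x := by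
    intro x hx
    have hxu : IsUnit (x : S) := by
      by_contra h
      exact hx (IsLocalRing.mem_maximalIdeal _ |>.mpr h)
    obtain ⟨u, hu⟩ := hxu
    have hy : ((↑u⁻¹ : S)) ∈ R := by
      rw [hmemR]
      have hxk : IsLocalRing.residue S (x : S) ∈ k := (hmemR _).mp x.2
      have h1 : IsLocalRing.residue S (x : S) * IsLocalRing.residue S (↑u⁻¹ : S) = 1 := by
        rw [← map_mul, ← hu, Units.mul_inv, map_one]
      have : IsLocalRing.residue S (↑u⁻¹ : S) = (IsLocalRing.residue S (x : S))⁻¹ :=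
        eq_inv_of_mul_eq_one_left (by rw [mul_comm] at h1; exact h1)
      rw [this]
      exact k.inv_mem hxk
    refine IsUnit.of_mul_eq_one (a := x) ⟨(↑u⁻¹ : S), hy⟩ ?_
    ext
    show (x : S) * (↑u⁻¹ : S) = 1
    rw [← hu, Units.mul_inv]
  haveI : Nontrivial R := ⟨⟨0, 1, fun h => by
    have : (0 : S) = 1 := congrArg Subtype.val h
    exact zero_ne_one this⟩⟩
  haveI hloc : IsLocalRing R := by
    apply IsLocalRing.of_isUnit_or_isUnit_one_sub_self
    intro a
    by_cases ha : (a : S) ∈ IsLocalRing.maximalIdeal S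
    · right
      apply hunit
      intro h
      have : (1 : S) ∈ IsLocalRing.maximalIdeal S := by
        have := Ideal.add_mem _ ha h
        simpa using this
      exact (IsLocalRing.maximalIdeal.isMaximal S).ne_top (Ideal.eq_top_of_isUnit_mem _ this isUnit_one)
    · exact Or.inl (hunit a ha)
  have h𝔪eq : 𝔪 = IsLocalRing.maximalIdeal R := by
    ext x
    rw [h𝔪]
    constructor
    · intro hx
      rw [IsLocalRing.mem_maximalIdeal, mem_nonunits_iff]
      intro hux
      have hus : IsUnit (x : S) := hux.map (SubringClass.subtype R)
      exact mem_nonunits_iff.mp (IsLocalRing.mem_maximalIdeal _ |>.mp hx) hus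
    · intro hx
      have hx' : ¬IsUnit x := mem_nonunits_iff.mp (IsLocalRing.mem_maximalIdeal _ |>.mp hx)
      rcases em ((x : S) ∈ IsLocalRing.maximalIdeal S) with hm | hm
      · exact hm
      · exact absurd (hunit x hm) hx'
  have h𝔪max : 𝔪.IsMaximal := h𝔪eq ▸ IsLocalRing.maximalIdeal.isMaximal R
  -- the residue map R → k
  have hfmem : ∀ r : R, IsLocalRing.residue S (r : S) ∈ k := fun r => (hmemR _).mp r.2
  let f : R →+* k :=
    { toFun := fun r => ⟨IsLocalRing.residue S (r : S), hfmem r⟩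
      map_one' := by ext; simp
      map_mul' := fun a b => by ext; simp
      map_zero' := by ext; simp
      map_add' := fun a b => by ext; simp }
  have hfsurj : Function.Surjective f := by
    intro c
    obtain ⟨s, hs⟩ := IsLocalRing.residue_surjective (R := S) (c : IsLocalRing.ResidueField S)
    have hsR : s ∈ R := (hmemR s).mpr (hs ▸ c.2)
    exact ⟨⟨s, hsR⟩, Subtype.ext hs⟩
  have hfker : ∀ a : R, a ∈ 𝔪 → f a = 0 := by
    intro a ha
    ext
    show IsLocalRing.residue S (a : S) = 0
    exact Ideal.Quotient.eq_zero_iff_mem.mpr ((h𝔪 a).mp ha)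
  have hkerle : RingHom.ker f ≤ 𝔪 := by
    intro a ha
    rw [RingHom.mem_ker] at ha
    have : IsLocalRing.residue S (a : S) = 0 := congrArg Subtype.val ha
    exact (h𝔪 a).mpr (Ideal.Quotient.eq_zero_iff_mem.mp this)
  let ψ' : R ⧸ 𝔪 →+* k := Ideal.Quotient.lift 𝔪 f hfker
  have hψinj : Function.Injective ψ' := RingHom.lift_injective_of_ker_le_ideal 𝔪 hfker hkerle
  have hψsurj : Function.Surjective ψ' := by
    intro c
    obtain ⟨r, hr⟩ := hfsurj c
    exact ⟨Ideal.Quotient.mk 𝔪 r, by rwa [Ideal.Quotient.lift_mk]⟩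
  let ψ : (R ⧸ 𝔪) ≃+* k := RingEquiv.ofBijective ψ' ⟨hψinj, hψsurj⟩
  -- uniformizer
  obtain ⟨π, hπ⟩ := IsDiscreteValuationRing.exists_irreducible S
  have hmax : IsLocalRing.maximalIdeal S = Ideal.span {π} := hπ.maximalIdeal_eq
  have hπm : π ∈ IsLocalRing.maximalIdeal S := hmax ▸ Ideal.mem_span_singleton_self π
  have hπs : ∀ s : S, π * s ∈ IsLocalRing.maximalIdeal S :=
    fun s => Ideal.mul_mem_right s _ hπm
  have hdvd : ∀ s : S, s ∈ IsLocalRing.maximalIdeal S → π ∣ s := by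
    intro s hs
    rw [hmax] at hs
    exact Ideal.mem_span_singleton.mp hs
  let elem : S → 𝔪 := fun s => ⟨⟨π * s, hmS_R _ (hπs s)⟩, (h𝔪 _).mpr (hπs s)⟩
  -- squares
  have hsq : ∀ x : R, x ∈ 𝔪 ^ 2 → π ^ 2 ∣ (x : S) := by
    intro x hx
    have hle : 𝔪 ^ 2 ≤ Ideal.comap (SubringClass.subtype R) (Ideal.span {π ^ 2}) := by
      rw [pow_two]
      refine Ideal.mul_le.mpr ?_
      intro a ha b hb
      obtain ⟨s, hs⟩ := hdvd _ ((h𝔪 a).mp ha)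
      obtain ⟨t, ht⟩ := hdvd _ ((h𝔪 b).mp hb)
      rw [Ideal.mem_comap]
      show ((a : S) * (b : S)) ∈ Ideal.span {π ^ 2}
      rw [Ideal.mem_span_singleton, hs, ht]
      exact ⟨s * t, by ring⟩
    exact Ideal.mem_span_singleton.mp (Ideal.mem_comap.mp (hle hx))
  have hπne : π ≠ 0 := hπ.ne_zero
  -- key computation in the cotangent space
  have hkey : ∀ s t : S, s - t ∈ IsLocalRing.maximalIdeal S →
      𝔪.toCotangent (elem s) = 𝔪.toCotangent (elem t) := by
    intro s t hst
    obtain ⟨c, hc⟩ := hdvd _ hst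
    rw [Ideal.toCotangent_eq]
    have heq : ((elem s : R) - (elem t : R)) =
        (⟨π, hmS_R _ hπm⟩ : R) * ⟨π * c, hmS_R _ (hπs c)⟩ := by
      ext
      show π * s - π * t = π * (π * c)
      rw [← mul_sub, hc]
    rw [heq, pow_two]
    exact Ideal.mul_mem_mul ((h𝔪 _).mpr hπm) ((h𝔪 _).mpr (hπs c))
  -- the map l → Cotangent
  let G : IsLocalRing.ResidueField S → 𝔪.Cotangent :=
    Quotient.lift (fun s => 𝔪.toCotangent (elem s)) (by
      intro a b hab
      refine hkey a b ?_
      exact (Submodule.quotientRel_def _).mp hab)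
  have hGmk : ∀ s : S, G (IsLocalRing.residue S s) = 𝔪.toCotangent (elem s) := fun s => rfl
  have hGsurj : Function.Surjective G := by
    intro m
    obtain ⟨x, rfl⟩ := 𝔪.toCotangent_surjective m
    obtain ⟨s, hs⟩ := hdvd _ ((h𝔪 x).mp x.2)
    refine ⟨IsLocalRing.residue S s, ?_⟩
    rw [hGmk]
    congr 1
    ext
    exact hs.symm
  have hGinj : Function.Injective G := by
    intro y₁ y₂ h
    obtain ⟨s, rfl⟩ := IsLocalRing.residue_surjective (R := S) y₁
    obtain ⟨t, rfl⟩ := IsLocalRing.residue_surjective (R := S) y₂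
    rw [hGmk, hGmk, Ideal.toCotangent_eq] at h
    have h2 : π ^ 2 ∣ ((elem s : R) : S) - ((elem t : R) : S) := by
      have := hsq _ h
      simpa using this
    have h3 : π ^ 2 ∣ π * (s - t) := by
      have : ((elem s : R) : S) - ((elem t : R) : S) = π * (s - t) := by
        show π * s - π * t = π * (s - t); ring
      rwa [this] at h2
    obtain ⟨c, hc⟩ := h3
    have hst : s - t ∈ IsLocalRing.maximalIdeal S := by
      rw [hmax, Ideal.mem_span_singleton]
      refine ⟨c, ?_⟩
      have : π * (s - t) = π * (π * c) := by rw [hc]; ring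
      exact mul_left_cancel₀ hπne this
    exact Ideal.Quotient.eq.mpr hst
  have hGadd : ∀ y₁ y₂, G (y₁ + y₂) = G y₁ + G y₂ := by
    intro y₁ y₂
    obtain ⟨s, rfl⟩ := IsLocalRing.residue_surjective (R := S) y₁
    obtain ⟨t, rfl⟩ := IsLocalRing.residue_surjective (R := S) y₂
    rw [← map_add, hGmk, hGmk, hGmk]
    rw [← map_add]
    congr 1
    ext
    show π * (s + t) = π * s + π * t
    ring
  let e : IsLocalRing.ResidueField S ≃+ 𝔪.Cotangent :=
    { Equiv.ofBijective G ⟨hGinj, hGsurj⟩ with map_add' := hGadd }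
  have heapp : ∀ y, e y = G y := fun y => rfl
  -- semilinearity
  have hsemi : ∀ (c : R ⧸ 𝔪) (y : IsLocalRing.ResidueField S),
      e ((ψ c : IsLocalRing.ResidueField S) • y) = c • e y := by
    intro c y
    obtain ⟨r, rfl⟩ := Ideal.Quotient.mk_surjective c
    obtain ⟨s, rfl⟩ := IsLocalRing.residue_surjective (R := S) y
    have hψr : (ψ (Ideal.Quotient.mk 𝔪 r) : IsLocalRing.ResidueField S) =
        IsLocalRing.residue S (r : S) := by
      show (ψ' (Ideal.Quotient.mk 𝔪 r) : IsLocalRing.ResidueField S) = _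
      rw [Ideal.Quotient.lift_mk]
      rfl
    rw [hψr]
    have hl : (IsLocalRing.residue S (r : S)) • (IsLocalRing.residue S s) =
        IsLocalRing.residue S ((r : S) * s) := by
      rw [smul_eq_mul, ← map_mul]
    rw [hl, heapp, heapp, hGmk, hGmk]
    have hrsmul : (Ideal.Quotient.mk 𝔪 r) • 𝔪.toCotangent (elem s) =
        𝔪.toCotangent (r • elem s) := rfl
    rw [hrsmul]
    congr 1
    ext
    show π * ((r : S) * s) = (r : S) * (π * s)
    ring
  -- compatibility in the form needed
  have hcomp : ∀ (c : R ⧸ 𝔪) (m : 𝔪.Cotangent),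
      e.symm (c • m) = (ψ c : k) • e.symm m := by
    intro c m
    apply e.injective
    rw [e.apply_symm_apply]
    have : ((ψ c : k) • e.symm m) = ((ψ c : k) : IsLocalRing.ResidueField S) • e.symm m := rfl
    rw [this, hsemi, e.apply_symm_apply]
  have hrank : Module.rank (R ⧸ 𝔪) 𝔪.Cotangent = Module.rank k (IsLocalRing.ResidueField S) := by
    refine rank_eq_of_equiv_equiv (M := 𝔪.Cotangent) (M₁ := IsLocalRing.ResidueField S)
      (fun c => ψ c) e.symm ψ.bijective ?_
    intro r m
    exact hcomp r m
  have hfin : Module.finrank (R ⧸ 𝔪) 𝔪.Cotangent = d := by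
    rw [Module.finrank, hrank, ← Module.finrank, hd]
  refine ⟨hloc, h𝔪max, ?_, ⟨ψ⟩, hfin⟩
  intro I hI
  rw [h𝔪eq]
  exact IsLocalRing.le_maximalIdeal hI
end
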